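/- arXiv:0911.3522 — 4 statements merged into one kernel-verified Lean document; each statement's English description precedes it below -/
import Mathlib

section
/- In any generalized ring A, every maximal proper h-ideal is prime; that is, Max(A) ⊆ spec(A). -/
open scoped Classical

noncomputable section

/-! ### Partially defined maps of finite sets -/

/-- Composition of partially defined maps of sets (`Set_•`). -/
def pcomp {X Y Z : Type} (g : Y → Option Z) (f : X → Option Y) : X → Option Z :=
  fun x => (f x).bind g

/-- The fiber of a partially defined map over a point of the target. -/
abbrev pfib {X Y : Type} (f : X → Option Y) (y : Y) : Type := {x : X // f x = some y}

/-- The fiber of the identity partial map over `x` is a singleton. -/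
def idFiberEquiv {X : Type} (x : X) : Fin 1 ≃ pfib (fun x' : X => some x') x where
  toFun _ := ⟨x, rfl⟩
  invFun _ := 0
  left_inv _ := Subsingleton.elim _ _
  right_inv p := Subtype.ext (Option.some.inj p.2).symm

/-- The fiber of the constant (total) map to the point `[1]` is everything. -/
def constFiberEquiv (X : Type) (z : Fin 1) :
    X ≃ pfib (fun _ : X => some (0 : Fin 1)) z where
  toFun x := ⟨x, congrArg some (Subsingleton.elim (0 : Fin 1) z)⟩
  invFun p := p.1
  left_inv _ := rfl
  right_inv p := rfl

/-- The fiber of (the graph of) a bijection is a singleton. -/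
def equivFiberEquiv {X Y : Type} (e : X ≃ Y) (y : Y) :
    Fin 1 ≃ pfib (fun x : X => some (e x)) y where
  toFun _ := ⟨e.symm y, congrArg some (e.apply_symm_apply y)⟩
  invFun _ := 0
  left_inv _ := Subsingleton.elim _ _
  right_inv p := Subtype.ext ((Equiv.symm_apply_eq e).mpr (Option.some.inj p.2).symm)

/-- The fiber of the map `[1] → X` with image `{x}` over `x' = x` is a singleton. -/
def pointFiberEquiv {X : Type} {x x' : X} (h : x = x') :
    Fin 1 ≃ pfib (fun _ : Fin 1 => some x) x' where
  toFun z := ⟨z, congrArg some h⟩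
  invFun p := p.1
  left_inv _ := rfl
  right_inv p := rfl

/-- Restriction of `f` to the fiber of `pcomp g f` over `z`, as a partial map into
the fiber of `g` over `z`. -/
def resMap {X Y Z : Type} (g : Y → Option Z) (f : X → Option Y) (z : Z) :
    pfib (pcomp g f) z → Option (pfib g z) :=
  fun x => (f x.1).bind fun y => if h : g y = some z then some ⟨y, h⟩ else none

/-- Identification of the fibers of the restriction `resMap g f z` with fibers of `f`. -/
def resFiberEquiv {X Y Z : Type} (g : Y → Option Z) (f : X → Option Y) (z : Z)
    (p : pfib g z) : pfib f p.1 ≃ pfib (resMap g f z) p where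
  toFun x := ⟨⟨x.1, by show (f x.1).bind g = some z; rw [x.2, Option.bind_some, p.2]⟩, by
    show (f x.1).bind _ = some p
    rw [x.2, Option.bind_some, dif_pos p.2]⟩
  invFun q := ⟨q.1.1, by
    have h := q.2
    unfold resMap at h
    rcases hf : f q.1.1 with _ | y
    · rw [hf, Option.bind_none] at h
      exact nomatch h
    · rw [hf, Option.bind_some] at h
      by_cases hg : g y = some z
      · rw [dif_pos hg] at h
        have hy : y = p.1 := congrArg Subtype.val (Option.some.inj h)
        exact congrArg some hy
      · rw [dif_neg hg] at h
        exact nomatch h⟩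
  left_inv x := Subtype.ext rfl
  right_inv q := Subtype.ext (Subtype.ext rfl)

/-! ### Fibered products -/

/-- The fibered product of two partial maps `g : Z ⇀ Y` and `f : X ⇀ Y`. -/
abbrev FP {X Y Z : Type} (g : Z → Option Y) (f : X → Option Y) : Type :=
  {p : Z × X // ∃ y : Y, g p.1 = some y ∧ f p.2 = some y}

/-- First projection of the fibered product, as a partial map. -/
def fpFst {X Y Z : Type} (g : Z → Option Y) (f : X → Option Y) : FP g f → Option Z :=
  fun p => some p.1.1

/-- Second projection of the fibered product, as a partial map. -/
def fpSnd {X Y Z : Type} (g : Z → Option Y) (f : X → Option Y) : FP g f → Option X :=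
  fun p => some p.1.2

/-- Identification of the fiber of the second projection of `Z ×_Y X` over `x`
with the fiber of `g` over `f x`. -/
def fpFiberSnd {X Y Z : Type} (g : Z → Option Y) (f : X → Option Y) {x : X} {y : Y}
    (hy : f x = some y) : pfib g y ≃ pfib (fpSnd g f) x where
  toFun w := ⟨⟨(w.1, x), ⟨y, w.2, hy⟩⟩, rfl⟩
  invFun q := ⟨q.1.1.1, by
    obtain ⟨y', hg, hf⟩ := q.1.2
    have hx : q.1.1.2 = x := Option.some.inj q.2
    rw [hx] at hf
    have hyy : y' = y := Option.some.inj (hf.symm.trans hy)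
    rw [hyy] at hg
    exact hg⟩
  left_inv w := Subtype.ext rfl
  right_inv q := by
    apply Subtype.ext
    apply Subtype.ext
    have hx : q.1.1.2 = x := Option.some.inj q.2
    exact Prod.ext rfl hx.symm

/-- Identification of the fiber of the first projection of `Z ×_Y X` over `z`
with the fiber of `f` over `g z`. -/
def fpFiberFst {X Y Z : Type} (g : Z → Option Y) (f : X → Option Y) {z : Z} {y : Y}
    (hy : g z = some y) : pfib f y ≃ pfib (fpFst g f) z where
  toFun w := ⟨⟨(z, w.1), ⟨y, hy, w.2⟩⟩, rfl⟩
  invFun q := ⟨q.1.1.2, by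
    obtain ⟨y', hg, hf⟩ := q.1.2
    have hz : q.1.1.1 = z := Option.some.inj q.2
    rw [hz] at hg
    have hyy : y' = y := Option.some.inj (hg.symm.trans hy)
    rw [hyy] at hf
    exact hf⟩
  left_inv w := Subtype.ext rfl
  right_inv q := by
    apply Subtype.ext
    apply Subtype.ext
    have hz : q.1.1.1 = z := Option.some.inj q.2
    exact Prod.ext hz.symm rfl
/-! ### Generalized rings

A generalized ring assigns to each finite set `X` a pointed set `A X`, functorially
with respect to bijections (and hence, via the operations and units, with respect to
all partial bijections of finite sets), together with operations of multiplication
`∘ : A Y × A f → A X` and contraction `( , ) : A X × A f → A Y` for every partially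
defined map `f : X ⇀ Y`, where `A f = ∏_{y ∈ Y} A (f⁻¹ y)`, and a unit `1 ∈ A [1]`,
subject to the axioms of associativity, left- and right-adjunction, left- and
right-linearity, and the unit axioms. -/

/-- The data underlying a generalized ring. -/
structure GenRingData where
  /-- the pointed set attached to a finite set `X` -/
  A : (X : Type) → [inst : Finite X] → Type
  /-- the base point `0_X ∈ A_X` -/
  zero : (X : Type) → [inst : Finite X] → A X
  /-- the unit `1 ∈ A_{[1]}` -/
  one : A (Fin 1)
  /-- functoriality with respect to bijections of finite sets -/
  map : {X Y : Type} → [inst : Finite X] → [inst' : Finite Y] → (X ≃ Y) → A X → A Y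
  /-- multiplication `∘ : A_Y × A_f → A_X` for a partially defined map `f : X ⇀ Y` -/
  mul : {X Y : Type} → [inst : Finite X] → [inst' : Finite Y] → (f : X → Option Y) →
      A Y → ((y : Y) → A (pfib f y)) → A X
  /-- contraction `( , ) : A_X × A_f → A_Y` for a partially defined map `f : X ⇀ Y` -/
  contr : {X Y : Type} → [inst : Finite X] → [inst' : Finite Y] → (f : X → Option Y) →
      A X → ((y : Y) → A (pfib f y)) → A Y

namespace GenRingData

variable (R : GenRingData)

/-- The unit family `1_{id_X} ∈ A_{id_X}`. -/
def oneId (X : Type) [Finite X] : (x : X) → R.A (pfib (fun x' : X => some x') x) :=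
  fun x => R.map (idFiberEquiv x) R.one

/-- The monoid operation `a ∘ b` on `A_{[1]}`. -/
def op (a b : R.A (Fin 1)) : R.A (Fin 1) :=
  R.mul (fun z : Fin 1 => some z) a (fun z => R.map (idFiberEquiv z) b)

/-- The `n`-fold power `a ∘ ⋯ ∘ a` in the monoid `A_{[1]}` (with `a⁰ = 1`). -/
def opPow (a : R.A (Fin 1)) : ℕ → R.A (Fin 1)
  | 0 => R.one
  | n + 1 => R.op a (opPow a n)

/-- The left action `s ∘ a` of `A_{[1]}` on `A_X` (operation (1.2.5)). -/
def lact {X : Type} [Finite X] (s : R.A (Fin 1)) (a : R.A X) : R.A X :=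
  R.mul (fun _ : X => some (0 : Fin 1)) s (fun z => R.map (constFiberEquiv X z) a)

/-- The pairing `(a, d) : A_X × A_X → A_{[1]}` (operation (1.2.6)). -/
def pair {X : Type} [Finite X] (a d : R.A X) : R.A (Fin 1) :=
  R.contr (fun _ : X => some (0 : Fin 1)) a (fun z => R.map (constFiberEquiv X z) d)

/-- The right (diagonal) action `b ∘ c` of `(A_{[1]})^X` on `A_X` (operation (1.2.7)). -/
def ract {X : Type} [Finite X] (b : R.A X) (c : X → R.A (Fin 1)) : R.A X :=
  R.mul (fun x : X => some x) b (fun x => R.map (idFiberEquiv x) (c x))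

/-- The involution `a ↦ aᵗ = (1, a)` of `A_{[1]}`. -/
def adj (a : R.A (Fin 1)) : R.A (Fin 1) := R.pair R.one a

/-- The element `(a, 1_{j_x}) ∈ A_X` obtained from `a ∈ A_{[1]}` via the
inclusion `j_x : {x} ↪ X`; for `a = 1` this is the image `1_x` of the unit. -/
def pointElt (X : Type) [Finite X] (x : X) (a : R.A (Fin 1)) : R.A X :=
  R.contr (fun _ : Fin 1 => some x) a
    (fun x' => if h : x = x' then R.map (pointFiberEquiv h) R.one else R.zero _)

/-- The extended multiplication `A_g × A_f → A_{g∘f}`, defined fiberwise. -/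
def emul {X Y Z : Type} [Finite X] [Finite Y] [Finite Z]
    (g : Y → Option Z) (f : X → Option Y)
    (c : (z : Z) → R.A (pfib g z)) (b : (y : Y) → R.A (pfib f y)) :
    (z : Z) → R.A (pfib (pcomp g f) z) :=
  fun z => R.mul (resMap g f z) (c z) (fun p => R.map (resFiberEquiv g f z p) (b p.1))

/-- The extended contraction `A_{g∘f} × A_f → A_g`, defined fiberwise. -/
def econtr {X Y Z : Type} [Finite X] [Finite Y] [Finite Z]
    (g : Y → Option Z) (f : X → Option Y)
    (a : (z : Z) → R.A (pfib (pcomp g f) z)) (b : (y : Y) → R.A (pfib f y)) :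
    (z : Z) → R.A (pfib g z) :=
  fun z => R.contr (resMap g f z) (a z) (fun p => R.map (resFiberEquiv g f z p) (b p.1))

/-- The pullback `ã ∈ A_{g̃}` of `a ∈ A_g` along the fibered product (used in
the right-linearity axiom). -/
def atilde {X Y Z : Type} [Finite X] [Finite Y] [Finite Z]
    (g : Z → Option Y) (f : X → Option Y) (a : (y : Y) → R.A (pfib g y)) :
    (x : X) → R.A (pfib (fpSnd g f) x) :=
  fun x =>
    match hfx : f x with
    | some y => R.map (fpFiberSnd g f hfx) (a y)
    | none => R.zero _

/-- The pullback `c̃ ∈ A_{f̃}` of `c ∈ A_f` along the fibered product (used in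
the right-linearity axiom). -/
def ctilde {X Y Z : Type} [Finite X] [Finite Y] [Finite Z]
    (g : Z → Option Y) (f : X → Option Y) (c : (y : Y) → R.A (pfib f y)) :
    (z : Z) → R.A (pfib (fpFst g f) z) :=
  fun z =>
    match hgz : g z with
    | some y => R.map (fpFiberFst g f hgz) (c y)
    | none => R.zero _

end GenRingData

/-- A generalized ring: the data of `GenRingData` subject to the axioms
(pointedness, functoriality, zero laws, associativity, left/right adjunction,
left/right linearity, and the unit axioms, the latter in their reduced form over
the one-point base, which is equivalent to the general form). -/
structure GenRing where
  /-- the underlying data -/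
  data : GenRingData
  /-- `A_∅ = {0}` -/
  isEmpty_eq_zero : ∀ (X : Type) [Finite X] [IsEmpty X] (a : data.A X), a = data.zero X
  /-- functoriality: identity -/
  map_refl : ∀ (X : Type) [Finite X] (a : data.A X), data.map (Equiv.refl X) a = a
  /-- functoriality: composition -/
  map_trans : ∀ {X Y Z : Type} [Finite X] [Finite Y] [Finite Z] (e : X ≃ Y) (e' : Y ≃ Z)
      (a : data.A X), data.map (e.trans e') a = data.map e' (data.map e a)
  /-- functoriality: the maps are pointed -/
  map_zero : ∀ {X Y : Type} [Finite X] [Finite Y] (e : X ≃ Y),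
      data.map e (data.zero X) = data.zero Y
  /-- `0 ∘ b = 0` -/
  mul_zero_left : ∀ {X Y : Type} [Finite X] [Finite Y] (f : X → Option Y)
      (b : (y : Y) → data.A (pfib f y)), data.mul f (data.zero Y) b = data.zero X
  /-- `a ∘ 0_f = 0` -/
  mul_zero_right : ∀ {X Y : Type} [Finite X] [Finite Y] (f : X → Option Y) (a : data.A Y),
      data.mul f a (fun y => data.zero (pfib f y)) = data.zero X
  /-- `(0, b) = 0` -/
  contr_zero_left : ∀ {X Y : Type} [Finite X] [Finite Y] (f : X → Option Y)
      (b : (y : Y) → data.A (pfib f y)), data.contr f (data.zero X) b = data.zero Y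
  /-- `(a, 0_f) = 0` -/
  contr_zero_right : ∀ {X Y : Type} [Finite X] [Finite Y] (f : X → Option Y) (a : data.A X),
      data.contr f a (fun y => data.zero (pfib f y)) = data.zero Y
  /-- associativity: `d ∘ (c ∘ b) = (d ∘ c) ∘ b` -/
  assoc : ∀ {X Y Z : Type} [Finite X] [Finite Y] [Finite Z]
      (g : Y → Option Z) (f : X → Option Y) (d : data.A Z)
      (c : (z : Z) → data.A (pfib g z)) (b : (y : Y) → data.A (pfib f y)),
      data.mul (pcomp g f) d (data.emul g f c b) = data.mul f (data.mul g d c) b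
  /-- left-adjunction: `(d, a ∘ c) = ((d, c), a)` -/
  left_adj : ∀ {X Y Z : Type} [Finite X] [Finite Y] [Finite Z]
      (g : Y → Option Z) (f : X → Option Y) (d : data.A X)
      (a : (z : Z) → data.A (pfib g z)) (c : (y : Y) → data.A (pfib f y)),
      data.contr (pcomp g f) d (data.emul g f a c) = data.contr g (data.contr f d c) a
  /-- right-adjunction: `(d ∘ c, a) = (d, (a, c))` -/
  right_adj : ∀ {X Y Z : Type} [Finite X] [Finite Y] [Finite Z]
      (g : Y → Option Z) (f : X → Option Y) (d : data.A Y)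
      (a : (z : Z) → data.A (pfib (pcomp g f) z)) (c : (y : Y) → data.A (pfib f y)),
      data.contr (pcomp g f) (data.mul f d c) a = data.contr g d (data.econtr g f a c)
  /-- left-linearity: `(d ∘ a, c) = d ∘ (a, c)` -/
  left_lin : ∀ {X Y Z : Type} [Finite X] [Finite Y] [Finite Z]
      (g : Y → Option Z) (f : X → Option Y) (d : data.A Z)
      (a : (z : Z) → data.A (pfib (pcomp g f) z)) (c : (y : Y) → data.A (pfib f y)),
      data.contr f (data.mul (pcomp g f) d a) c = data.mul g d (data.econtr g f a c)
  /-- right-linearity: `(d, c) ∘ a = (d ∘ ã, c̃)`, with `ã`, `c̃` the pullbacks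
  along the fibered product `Z ×_Y X` -/
  right_lin : ∀ {X Y Z : Type} [Finite X] [Finite Y] [Finite Z]
      (g : Z → Option Y) (f : X → Option Y) (d : data.A X)
      (a : (y : Y) → data.A (pfib g y)) (c : (y : Y) → data.A (pfib f y)),
      data.mul g (data.contr f d c) a
        = data.contr (fpFst g f) (data.mul (fpSnd g f) d (data.atilde g f a))
            (data.ctilde g f c)
  /-- unit axiom: `a ∘ 1_{id_X} = a` -/
  mul_one_id : ∀ (X : Type) [Finite X] (a : data.A X),
      data.mul (fun x : X => some x) a (data.oneId X) = a
  /-- unit axiom: `1 ∘ a = a` -/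
  one_lact : ∀ (X : Type) [Finite X] (a : data.A X), data.lact data.one a = a
  /-- unit axiom: `(a, 1_{id_X}) = a` -/
  contr_one_id : ∀ (X : Type) [Finite X] (a : data.A X),
      data.contr (fun x : X => some x) a (data.oneId X) = a
  /-- unit axiom (1.8.11): `(a, 1_f) = f_A(a)` for a bijection `f = e` -/
  map_eq_contr : ∀ {X Y : Type} [Finite X] [Finite Y] (e : X ≃ Y) (a : data.A X),
      data.contr (fun x : X => some (e x)) a
        (fun y => data.map (equivFiberEquiv e y) data.one) = data.map e a
  /-- unit axiom (1.8.11): `a ∘ 1_{fᵗ} = f_A(a)` for a bijection `f = e` -/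
  map_eq_mul : ∀ {X Y : Type} [Finite X] [Finite Y] (e : X ≃ Y) (a : data.A X),
      data.mul (fun y : Y => some (e.symm y)) a
        (fun x => data.map (equivFiberEquiv e.symm x) data.one) = data.map e a
namespace GenRing

variable (R : GenRing)

/-- An `h`-ideal of a generalized ring: a subset `I ⊆ A_{[1]}` such that
`(b ∘ c, d) ∈ I` for all finite `X`, all `b, d ∈ A_X` and all `c ∈ I^X ⊆ (A_{[1]})^X`. -/
def IsHIdeal (I : Set (R.data.A (Fin 1))) : Prop :=
  ∀ (X : Type) [Finite X], ∀ (b d : R.data.A X) (c : X → R.data.A (Fin 1)),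
    (∀ x, c x ∈ I) → R.data.pair (R.data.ract b c) d ∈ I

/-- A prime of a generalized ring: a proper `h`-ideal `P` whose complement is
closed under the multiplication of `A_{[1]}`. -/
def IsPrimeH (P : Set (R.data.A (Fin 1))) : Prop :=
  R.IsHIdeal P ∧ R.data.one ∉ P ∧
    ∀ a b : R.data.A (Fin 1), R.data.op a b ∈ P → a ∈ P ∨ b ∈ P

end GenRing

/-- The spectrum of a generalized ring: the set of its primes. -/
structure SpecG (R : GenRing) where
  /-- the underlying prime `h`-ideal -/
  I : Set (R.data.A (Fin 1))
  /-- it is prime -/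
  prime : R.IsPrimeH I

namespace GenRing

variable (R : GenRing)

/-- The basic open set `D_a = {𝔭 : a ∉ 𝔭}` of the Zariski topology. -/
def basicOpen (a : R.data.A (Fin 1)) : Set (SpecG R) := {p | a ∉ p.I}

/-- The closed set `V(s) = {𝔭 : 𝔭 ⊇ s}` of the Zariski topology. -/
def zeroLocus (s : Set (R.data.A (Fin 1))) : Set (SpecG R) := {p | s ⊆ p.I}

/-- The Zariski topology on the spectrum, generated by the basic open sets. -/
instance : TopologicalSpace (SpecG R) :=
  TopologicalSpace.generateFrom {U | ∃ a : R.data.A (Fin 1), U = R.basicOpen a}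

end GenRing

/-- A homomorphism of generalized rings: a (pointed, natural) family of maps
preserving multiplication, contraction and the unit. -/
structure GenRingHom (R S : GenRing) where
  /-- the underlying family of maps -/
  app : (X : Type) → [inst : Finite X] → R.data.A X → S.data.A X
  /-- zero is preserved -/
  app_zero : ∀ (X : Type) [Finite X], app X (R.data.zero X) = S.data.zero X
  /-- the unit is preserved -/
  app_one : app (Fin 1) R.data.one = S.data.one
  /-- naturality with respect to bijections -/
  app_map : ∀ {X Y : Type} [Finite X] [Finite Y] (e : X ≃ Y) (a : R.data.A X),
      app Y (R.data.map e a) = S.data.map e (app X a)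
  /-- multiplication is preserved -/
  app_mul : ∀ {X Y : Type} [Finite X] [Finite Y] (f : X → Option Y)
      (a : R.data.A Y) (b : (y : Y) → R.data.A (pfib f y)),
      app X (R.data.mul f a b) = S.data.mul f (app Y a) (fun y => app (pfib f y) (b y))
  /-- contraction is preserved -/
  app_contr : ∀ {X Y : Type} [Finite X] [Finite Y] (f : X → Option Y)
      (a : R.data.A X) (b : (y : Y) → R.data.A (pfib f y)),
      app Y (R.data.contr f a b) = S.data.contr f (app X a) (fun y => app (pfib f y) (b y))

namespace GenRingHom

variable {R S : GenRing} (φ : GenRingHom R S)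

theorem app_op (a b : R.data.A (Fin 1)) :
    φ.app (Fin 1) (R.data.op a b) = S.data.op (φ.app (Fin 1) a) (φ.app (Fin 1) b) := by
  unfold GenRingData.op
  rw [φ.app_mul]
  congr 1
  funext z
  rw [φ.app_map]

theorem app_ract {X : Type} [Finite X] (b : R.data.A X) (c : X → R.data.A (Fin 1)) :
    φ.app X (R.data.ract b c) = S.data.ract (φ.app X b) (fun x => φ.app (Fin 1) (c x)) := by
  unfold GenRingData.ract
  rw [φ.app_mul]
  congr 1
  funext x
  rw [φ.app_map]

theorem app_pair {X : Type} [Finite X] (a d : R.data.A X) :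
    φ.app (Fin 1) (R.data.pair a d) = S.data.pair (φ.app X a) (φ.app X d) := by
  unfold GenRingData.pair
  rw [φ.app_contr]
  congr 1
  funext z
  rw [φ.app_map]

theorem app_lact {X : Type} [Finite X] (s : R.data.A (Fin 1)) (a : R.data.A X) :
    φ.app X (R.data.lact s a) = S.data.lact (φ.app (Fin 1) s) (φ.app X a) := by
  unfold GenRingData.lact
  rw [φ.app_mul]
  congr 1
  funext z
  rw [φ.app_map]

/-- The map `spec(φ) : spec(S) → spec(R)`, `𝔮 ↦ φ_{[1]}⁻¹(𝔮)`, induced by a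
homomorphism of generalized rings `φ : R → S`. -/
def specMap (q : SpecG S) : SpecG R where
  I := φ.app (Fin 1) ⁻¹' q.I
  prime := by
    refine ⟨?_, ?_, ?_⟩
    · intro X _ b d c hc
      show φ.app (Fin 1) (R.data.pair (R.data.ract b c) d) ∈ q.I
      rw [φ.app_pair, φ.app_ract]
      exact q.prime.1 X (φ.app X b) (φ.app X d) (fun x => φ.app (Fin 1) (c x)) hc
    · show φ.app (Fin 1) R.data.one ∉ q.I
      rw [φ.app_one]
      exact q.prime.2.1
    · intro a b hab
      have h : S.data.op (φ.app (Fin 1) a) (φ.app (Fin 1) b) ∈ q.I := by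
        rw [← φ.app_op]; exact hab
      exact q.prime.2.2 _ _ h

end GenRingHom

/-- An equivalence ideal of a generalized ring: a family of equivalence relations
on the sets `A_X` respecting the operations of multiplication and contraction. -/
structure EqvIdeal (R : GenRing) where
  /-- the family of relations -/
  rel : (X : Type) → [inst : Finite X] → R.data.A X → R.data.A X → Prop
  refl : ∀ (X : Type) [Finite X] (a : R.data.A X), rel X a a
  symm : ∀ (X : Type) [Finite X] {a b : R.data.A X}, rel X a b → rel X b a
  trans : ∀ (X : Type) [Finite X] {a b c : R.data.A X}, rel X a b → rel X b c → rel X a c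
  /-- `a ∼ a'` implies `a ∘ b ∼ a' ∘ b` -/
  mul_left : ∀ {X Y : Type} [Finite X] [Finite Y] (f : X → Option Y) {a a' : R.data.A Y}
      (b : (y : Y) → R.data.A (pfib f y)),
      rel Y a a' → rel X (R.data.mul f a b) (R.data.mul f a' b)
  /-- `b ∼ b'` (componentwise) implies `a ∘ b ∼ a ∘ b'` -/
  mul_right : ∀ {X Y : Type} [Finite X] [Finite Y] (f : X → Option Y) (a : R.data.A Y)
      {b b' : (y : Y) → R.data.A (pfib f y)},
      (∀ y, rel (pfib f y) (b y) (b' y)) → rel X (R.data.mul f a b) (R.data.mul f a b')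
  /-- `a ∼ a'` implies `(a, b) ∼ (a', b)` -/
  contr_left : ∀ {X Y : Type} [Finite X] [Finite Y] (f : X → Option Y) {a a' : R.data.A X}
      (b : (y : Y) → R.data.A (pfib f y)),
      rel X a a' → rel Y (R.data.contr f a b) (R.data.contr f a' b)
  /-- `b ∼ b'` (componentwise) implies `(a, b) ∼ (a, b')` -/
  contr_right : ∀ {X Y : Type} [Finite X] [Finite Y] (f : X → Option Y) (a : R.data.A X)
      {b b' : (y : Y) → R.data.A (pfib f y)},
      (∀ y, rel (pfib f y) (b y) (b' y)) → rel Y (R.data.contr f a b) (R.data.contr f a b')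

namespace GenRing

variable (R : GenRing)

/-- The equivalence ideal `E(I)` generated by an (`h`-)ideal `I`: `a ∼ b` iff the
pair `(a, b)` belongs to every equivalence ideal containing `(i, 0)` for all `i ∈ I`. -/
def erel (I : Set (R.data.A (Fin 1))) (X : Type) [Finite X] (a b : R.data.A X) : Prop :=
  ∀ ε : EqvIdeal R, (∀ i ∈ I, ε.rel (Fin 1) i (R.data.zero (Fin 1))) → ε.rel X a b

/-- A stable `h`-ideal: an `h`-ideal `I` such that for every pair `(a, b)` in the
equivalence ideal `E(I)` generated by `I` one has `a ∈ I ↔ b ∈ I`. -/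
def IsStableHIdeal (I : Set (R.data.A (Fin 1))) : Prop :=
  R.IsHIdeal I ∧ ∀ a b : R.data.A (Fin 1), R.erel I (Fin 1) a b → (a ∈ I ↔ b ∈ I)

/-- A multiplicative subset of `A_{[1]}`: contains `1`, closed under `∘`,
and stable under the involution. -/
def IsMulSet (S : Set (R.data.A (Fin 1))) : Prop :=
  R.data.one ∈ S ∧ (∀ a ∈ S, ∀ b ∈ S, R.data.op a b ∈ S) ∧
    (∀ a, a ∈ S ↔ R.data.adj a ∈ S)

/-- `φ : R → L` presents `L` as the localization `S⁻¹R` of `R` at the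
multiplicative subset `S ⊆ A_{[1]}`: every element of `S` becomes invertible, every
element of `L` is a fraction `φ(a)/φ(s)`, and `φ(a) = φ(b)` iff `s ∘ a = s ∘ b`
for some `s ∈ S`. -/
def IsLocalizationAt (S : Set (R.data.A (Fin 1))) {L : GenRing} (φ : GenRingHom R L) : Prop :=
  (∀ s ∈ S, ∃ t : L.data.A (Fin 1),
      L.data.op t (φ.app (Fin 1) s) = L.data.one ∧
      L.data.op (φ.app (Fin 1) s) t = L.data.one) ∧
  (∀ (X : Type) [Finite X], ∀ l : L.data.A X, ∃ (a : R.data.A X) (s : R.data.A (Fin 1)),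
      s ∈ S ∧ L.data.lact (φ.app (Fin 1) s) l = φ.app X a) ∧
  (∀ (X : Type) [Finite X], ∀ a b : R.data.A X,
      φ.app X a = φ.app X b ↔ ∃ s ∈ S, R.data.lact s a = R.data.lact s b)

end GenRing


/-! ### Auxiliary lemmas for the proof that maximal h-ideals are prime -/

section MaxPrime

open GenRingData

variable (R : GenRing)

/-- `map e.symm ∘ map e = id`. -/
lemma aux_map_map_symm {X Y : Type} [Finite X] [Finite Y] (e : X ≃ Y) (a : R.data.A X) :
    R.data.map e.symm (R.data.map e a) = a := by
  rw [← R.map_trans, Equiv.self_trans_symm, R.map_refl]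

/-- Congruence for multiplication along equal maps. -/
lemma aux_mul_hcongr {X Y : Type} [Finite X] [Finite Y] {f g : X → Option Y} (h : f = g)
    (a : R.data.A Y) {b : (y : Y) → R.data.A (pfib f y)} {b' : (y : Y) → R.data.A (pfib g y)}
    (hb : ∀ y, HEq (b y) (b' y)) : R.data.mul f a b = R.data.mul g a b' := by
  subst h
  have hb' : b = b' := funext fun y => eq_of_heq (hb y)
  rw [hb']

/-- Congruence for contraction along equal maps. -/
lemma aux_contr_hcongr {X Y : Type} [Finite X] [Finite Y] {f g : X → Option Y} (h : f = g)
    (a : R.data.A X) {b : (y : Y) → R.data.A (pfib f y)} {b' : (y : Y) → R.data.A (pfib g y)}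
    (hb : ∀ y, HEq (b y) (b' y)) : R.data.contr f a b = R.data.contr g a b' := by
  subst h
  have hb' : b = b' := funext fun y => eq_of_heq (hb y)
  rw [hb']

/-- Transported values along equal equivalences into fibers of equal maps are heq. -/
lemma aux_heq_map_map {X Y S : Type} [Finite X] [Finite Y] [Finite S]
    {f g : X → Option Y} (h : f = g) {y : Y}
    (e₁ : S ≃ pfib f y) (e₂ : S ≃ pfib g y) (he : ∀ r, (e₁ r).1 = (e₂ r).1)
    (v : R.data.A S) : HEq (R.data.map e₁ v) (R.data.map e₂ v) := by
  subst h
  have : e₁ = e₂ := Equiv.ext fun r => Subtype.ext (he r)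
  rw [this]

/-- Equal equivalences give equal maps. -/
lemma aux_map_congr {X Y : Type} [Finite X] [Finite Y] {e₁ e₂ : X ≃ Y} (h : e₁ = e₂)
    (v : R.data.A X) : R.data.map e₁ v = R.data.map e₂ v := by rw [h]

end MaxPrime

section MaxPrime2

open GenRingData

variable (R : GenRing)

/-- Fiber equivalence for a reindexed map. -/
def fibSrc {X X' Y : Type} (eX : X' ≃ X) (f : X → Option Y) (f' : X' → Option Y)
    (hc : ∀ x', f' x' = f (eX x')) (y : Y) : pfib f y ≃ pfib f' y where
  toFun p := ⟨eX.symm p.1, by rw [hc, eX.apply_symm_apply]; exact p.2⟩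
  invFun q := ⟨eX q.1, by rw [← hc]; exact q.2⟩
  left_inv p := Subtype.ext (eX.apply_symm_apply p.1)
  right_inv q := Subtype.ext (eX.symm_apply_apply q.1)

/-- Source reindexing for multiplication. -/
lemma aux_mul_src {X X' Y : Type} [Finite X] [Finite X'] [Finite Y]
    (eX : X' ≃ X) (f : X → Option Y) (f' : X' → Option Y) (hc : ∀ x', f' x' = f (eX x'))
    (a : R.data.A Y) (b : (y : Y) → R.data.A (pfib f y)) :
    R.data.map eX.symm (R.data.mul f a b)
      = R.data.mul f' a (fun y => R.data.map (fibSrc eX f f' hc y) (b y)) := by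
  have hf' : f' = fun x' => f (eX x') := funext hc
  subst hf'
  rw [← R.map_eq_mul eX.symm (R.data.mul f a b)]
  rw [← R.assoc f (fun x' => some (eX.symm.symm x')) a b
    (fun x => R.data.map (equivFiberEquiv eX.symm.symm x) R.data.one)]
  refine aux_mul_hcongr R ?_ a ?_
  · rfl
  · intro y
    refine heq_of_eq ?_
    show R.data.mul (resMap f (fun x' => some (eX.symm.symm x')) y) (b y) _ = _
    rw [← R.map_eq_mul (fibSrc eX f _ hc y) (b y)]
    refine aux_mul_hcongr R ?_ (b y) ?_
    · funext q
      show Option.bind (some (eX.symm.symm q.1)) _ = _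
      rw [Option.bind_some, dif_pos (show f (eX.symm.symm q.1) = some y from q.2)]
      exact congrArg some (Subtype.ext rfl)
    · intro p
      rw [← R.map_trans]
      refine aux_heq_map_map R ?_ _ _ ?_ R.data.one
      · funext q
        show Option.bind (some (eX.symm.symm q.1)) _ = _
        rw [Option.bind_some, dif_pos (show f (eX.symm.symm q.1) = some y from q.2)]
        exact congrArg some (Subtype.ext rfl)
      · intro r
        exact Subtype.ext rfl

end MaxPrime2

section MaxPrime3

open GenRingData

variable (R : GenRing)

/-- Source reindexing for contraction. -/
lemma aux_contr_src {X X' Y : Type} [Finite X] [Finite X'] [Finite Y]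
    (eX : X' ≃ X) (f : X → Option Y) (f' : X' → Option Y) (hc : ∀ x', f' x' = f (eX x'))
    (a : R.data.A X) (bfam : (y : Y) → R.data.A (pfib f' y)) :
    R.data.contr f' (R.data.map eX.symm a) bfam
      = R.data.contr f a (fun y => R.data.map (fibSrc eX f f' hc y).symm (bfam y)) := by
  have hf' : f' = fun x' => f (eX x') := funext hc
  subst hf'
  rw [← R.map_eq_mul eX.symm a]
  have step := R.right_adj f (fun x' => some (eX.symm.symm x')) a bfam
    (fun x => R.data.map (equivFiberEquiv eX.symm.symm x) R.data.one)
  refine step.trans ?_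
  refine congrArg _ ?_
  funext y
  show R.data.contr (resMap f (fun x' => some (eX.symm.symm x')) y) (bfam y) _ = _
  rw [← R.map_eq_contr ((fibSrc eX f _ hc y).symm) (bfam y)]
  refine aux_contr_hcongr R ?_ (bfam y) ?_
  · funext q
    show Option.bind (some (eX.symm.symm q.1)) _ = _
    rw [Option.bind_some, dif_pos (show f (eX.symm.symm q.1) = some y from q.2)]
    exact congrArg some (Subtype.ext rfl)
  · intro p
    rw [← R.map_trans]
    refine aux_heq_map_map R ?_ _ _ ?_ R.data.one
    · funext q
      show Option.bind (some (eX.symm.symm q.1)) _ = _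
      rw [Option.bind_some, dif_pos (show f (eX.symm.symm q.1) = some y from q.2)]
      exact congrArg some (Subtype.ext rfl)
    · intro r
      exact Subtype.ext rfl

end MaxPrime3

section MaxPrime4

open GenRingData

variable (R : GenRing)

/-- Evaluation of `ctilde` at a point where `g` is defined. -/
lemma aux_ctilde_eval {X Y Z : Type} [Finite X] [Finite Y] [Finite Z]
    (g : Z → Option Y) (f : X → Option Y) (c : (y : Y) → R.data.A (pfib f y))
    {z : Z} {y : Y} (h : g z = some y) :
    R.data.ctilde g f c z = R.data.map (fpFiberFst g f h) (c y) := by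
  unfold GenRingData.ctilde
  split
  · next y' heq =>
    have hy : y' = y := Option.some.inj (heq.symm.trans h)
    subst hy
    rfl
  · next heq =>
    rw [heq] at h
    exact nomatch h

/-- Evaluation of `atilde` at a point where `f` is defined. -/
lemma aux_atilde_eval {X Y Z : Type} [Finite X] [Finite Y] [Finite Z]
    (g : Z → Option Y) (f : X → Option Y) (a : (y : Y) → R.data.A (pfib g y))
    {x : X} {y : Y} (h : f x = some y) :
    R.data.atilde g f a x = R.data.map (fpFiberSnd g f h) (a y) := by
  unfold GenRingData.atilde
  split
  · next y' heq =>
    have hy : y' = y := Option.some.inj (heq.symm.trans h)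
    subst hy
    rfl
  · next heq =>
    rw [heq] at h
    exact nomatch h

/-- On the one-point set, `op` agrees with `lact`. -/
lemma aux_op_eq_lact (α v : R.data.A (Fin 1)) : R.data.op α v = R.data.lact α v := by
  refine aux_mul_hcongr R ?_ α ?_
  · funext z
    exact congrArg some (Subsingleton.elim z 0)
  · intro z
    refine aux_heq_map_map R ?_ _ _ ?_ v
    · funext z
      exact congrArg some (Subsingleton.elim z 0)
    · intro r
      exact Subsingleton.elim _ _

/-- `1 ∘ b = b` in `A_[1]`. -/
lemma aux_op_one (b : R.data.A (Fin 1)) : R.data.op R.data.one b = b :=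
  (aux_op_eq_lact R R.data.one b).trans (R.one_lact _ b)

/-- `ract` of `1` against a constant family is the value. -/
lemma aux_ract_one_const (x : R.data.A (Fin 1)) :
    R.data.ract R.data.one (fun _ : Fin 1 => x) = x :=
  aux_op_one R x

/-- A contraction along a map to `[1]` which is totally defined is a pairing. -/
lemma aux_contr_fin1 {X : Type} [Finite X] (h : X → Option (Fin 1)) (hh : ∀ x, h x = some 0)
    (a : R.data.A X) (bfam : (z : Fin 1) → R.data.A (pfib h z)) :
    ∃ d₀ : R.data.A X, R.data.contr h a bfam = R.data.pair a d₀ := by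
  have hfun : h = fun _ => some (0 : Fin 1) := funext hh
  subst hfun
  let e0 : pfib (fun _ : X => some (0 : Fin 1)) 0 ≃ X :=
    ⟨fun p => p.1, fun x => ⟨x, rfl⟩, fun p => Subtype.ext rfl, fun x => rfl⟩
  refine ⟨R.data.map e0 (bfam 0), ?_⟩
  show R.data.contr _ a bfam = R.data.contr _ a _
  refine congrArg _ ?_
  funext z
  have hz : z = 0 := Subsingleton.elim z 0
  subst hz
  rw [← R.map_trans]
  have he : e0.trans (constFiberEquiv X 0) = Equiv.refl _ := Equiv.ext fun p => Subtype.ext rfl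
  rw [he, R.map_refl]

end MaxPrime4

section MaxPrime5

open GenRingData

variable (R : GenRing)

/-- The key one-point computation: a multiplication over singleton index types
computes the product `α ∘ β` (suitably transported). -/
lemma aux_prim {P Q : Type} [Finite P] [Finite Q]
    (hP : ∀ p p' : P, p = p') (hQ : ∀ q q' : Q, q = q')
    (p1 : Fin 1 ≃ P) (q1 : Fin 1 ≃ Q)
    (r : P → Option Q) (hr : ∀ p, r p = some (q1 0))
    (α β : R.data.A (Fin 1))
    (bf : (q : Q) → R.data.A (pfib r q)) (eb : (q : Q) → Fin 1 ≃ pfib r q)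
    (hbf : ∀ q, bf q = R.data.map (eb q) β) :
    R.data.mul r (R.data.map q1 α) bf = R.data.map p1 (R.data.op α β) := by
  have hFP : ∀ w w' : FP r (fun z : Fin 1 => some (q1 z)), w = w' := fun w w' =>
    Subtype.ext (Prod.ext (hP _ _) (Subsingleton.elim _ _))
  let w₀ : FP r (fun z : Fin 1 => some (q1 z)) := ⟨(p1 0, 0), ⟨q1 0, hr _, rfl⟩⟩
  let eF : FP r (fun z : Fin 1 => some (q1 z)) ≃ P :=
    ⟨fun w => w.1.1, fun p => ⟨(p, 0), ⟨q1 0, hr p, rfl⟩⟩, fun w => hFP _ _, fun p => hP _ _⟩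
  let eFP : Fin 1 ≃ FP r (fun z : Fin 1 => some (q1 z)) :=
    ⟨fun _ => w₀, fun _ => 0, fun z => Subsingleton.elim _ _, fun w => hFP _ _⟩
  rw [← R.map_eq_contr q1 α]
  rw [R.right_lin r (fun z : Fin 1 => some (q1 z)) α bf
    (fun q => R.data.map (equivFiberEquiv q1 q) R.data.one)]
  have hVV : R.data.mul (fpSnd r (fun z : Fin 1 => some (q1 z))) α
      (R.data.atilde r (fun z : Fin 1 => some (q1 z)) bf)
      = R.data.map eFP (R.data.op α β) := by
    rw [aux_op_eq_lact]
    have hsrc := aux_mul_src R eFP.symm (fun _ : Fin 1 => some (0 : Fin 1))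
      (fun _ : FP r (fun z : Fin 1 => some (q1 z)) => some (0 : Fin 1)) (fun w => rfl)
      α (fun z => R.data.map (constFiberEquiv (Fin 1) z) β)
    refine Eq.trans ?_ hsrc.symm
    refine aux_mul_hcongr R ?_ α ?_
    · funext w
      exact congrArg some (Subsingleton.elim _ _)
    · intro z
      rw [aux_atilde_eval R r (fun z : Fin 1 => some (q1 z)) bf
        (rfl : (fun z : Fin 1 => some (q1 z)) z = some (q1 z)), hbf, ← R.map_trans,
        ← R.map_trans]
      refine aux_heq_map_map R ?_ _ _ ?_ β
      · funext w
        exact congrArg some (Subsingleton.elim _ _)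
      · intro s
        exact hFP _ _
  rw [hVV]
  have hfin : R.data.map p1 (R.data.op α β)
      = R.data.contr (fun w => some (eF w)) (R.data.map eFP (R.data.op α β))
        (fun p => R.data.map (equivFiberEquiv eF p) R.data.one) := by
    rw [R.map_eq_contr eF, ← R.map_trans]
    exact aux_map_congr R (Equiv.ext fun z => hP _ _).symm _
  rw [hfin]
  refine aux_contr_hcongr R ?_ _ ?_
  · funext w
    rfl
  · intro p
    rw [aux_ctilde_eval R r (fun z : Fin 1 => some (q1 z))
      (fun q => R.data.map (equivFiberEquiv q1 q) R.data.one) (hr p), ← R.map_trans]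
    refine aux_heq_map_map R ?_ _ _ ?_ R.data.one
    · funext w
      rfl
    · intro s
      exact hFP _ _

end MaxPrime5

section MaxPrime6

open GenRingData

variable (R : GenRing)

/-- `x ∘ s` is a pairing `(x, d₀)` for some `d₀`. -/
lemma aux_op_pair (x s : R.data.A (Fin 1)) :
    ∃ d₀ : R.data.A (Fin 1), R.data.op x s = R.data.pair x d₀ := by
  have step := R.right_adj (fun z : Fin 1 => some z) (fun z : Fin 1 => some z) x
    (R.data.oneId (Fin 1)) (fun z => R.data.map (idFiberEquiv z) s)
  have step2 : R.data.contr (fun z : Fin 1 => some z) (R.data.op x s) (R.data.oneId (Fin 1))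
      = R.data.contr (fun z : Fin 1 => some z) x
        (R.data.econtr (fun z : Fin 1 => some z) (fun z : Fin 1 => some z)
          (R.data.oneId (Fin 1)) (fun z => R.data.map (idFiberEquiv z) s)) := step
  rw [R.contr_one_id] at step2
  obtain ⟨d₀, hd⟩ := aux_contr_fin1 R (fun z : Fin 1 => some z)
    (fun z => congrArg some (Subsingleton.elim z 0)) x
    (R.data.econtr (fun z : Fin 1 => some z) (fun z : Fin 1 => some z)
      (R.data.oneId (Fin 1)) (fun z => R.data.map (idFiberEquiv z) s))
  exact ⟨d₀, step2.trans hd⟩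

/-- An h-ideal is closed under right multiplication. -/
lemma aux_mem_op {m : Set (R.data.A (Fin 1))} (hm : R.IsHIdeal m) {x : R.data.A (Fin 1)}
    (hx : x ∈ m) (s : R.data.A (Fin 1)) : R.data.op x s ∈ m := by
  obtain ⟨d₀, hd⟩ := aux_op_pair R x s
  rw [hd, ← aux_ract_one_const R x]
  exact hm (Fin 1) R.data.one d₀ (fun _ => x) (fun _ => hx)

end MaxPrime6

section MaxPrime7

open GenRingData

variable (R : GenRing)

/-- The key identity: right multiplication by `s` distributes into the `c`-slot
of an h-ideal generator `(b' ∘ c, d)`. -/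
lemma aux_key {X : Type} [Finite X] (b' : R.data.A X) (c : X → R.data.A (Fin 1))
    (d : R.data.A X) (s : R.data.A (Fin 1)) :
    ∃ d'' : R.data.A X,
      R.data.op (R.data.pair (R.data.ract b' c) d) s
        = R.data.pair (R.data.ract b' (fun x => R.data.op (c x) s)) d'' := by
  -- the fibered product [1] ×_[1] X and its identification with X
  let eW : FP (fun z : Fin 1 => some z) (fun _ : X => some (0 : Fin 1)) ≃ X :=
    ⟨fun w => w.1.2, fun x => ⟨((0 : Fin 1), x), ⟨0, rfl, rfl⟩⟩,
     fun w => Subtype.ext (Prod.ext (Subsingleton.elim _ _) rfl), fun x => rfl⟩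
  -- Step 1: right-linearity
  have step1 : R.data.op (R.data.pair (R.data.ract b' c) d) s
      = R.data.contr (fpFst (fun z : Fin 1 => some z) (fun _ : X => some (0 : Fin 1)))
          (R.data.mul (fpSnd (fun z : Fin 1 => some z) (fun _ : X => some (0 : Fin 1)))
            (R.data.ract b' c)
            (R.data.atilde (fun z : Fin 1 => some z) (fun _ : X => some (0 : Fin 1))
              (fun z => R.data.map (idFiberEquiv z) s)))
          (R.data.ctilde (fun z : Fin 1 => some z) (fun _ : X => some (0 : Fin 1))
            (fun z => R.data.map (constFiberEquiv X z) d)) :=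
    R.right_lin (fun z : Fin 1 => some z) (fun _ : X => some (0 : Fin 1)) (R.data.ract b' c)
      (fun z => R.data.map (idFiberEquiv z) s) (fun z => R.data.map (constFiberEquiv X z) d)
  -- Step 2: the transported base computes the diagonal action
  have hmapV : R.data.map eW
      (R.data.mul (fpSnd (fun z : Fin 1 => some z) (fun _ : X => some (0 : Fin 1)))
        (R.data.ract b' c)
        (R.data.atilde (fun z : Fin 1 => some z) (fun _ : X => some (0 : Fin 1))
          (fun z => R.data.map (idFiberEquiv z) s)))
      = R.data.ract b' (fun x => R.data.op (c x) s) := by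
    have hsrc : R.data.map eW
        (R.data.mul (fpSnd (fun z : Fin 1 => some z) (fun _ : X => some (0 : Fin 1)))
          (R.data.ract b' c)
          (R.data.atilde (fun z : Fin 1 => some z) (fun _ : X => some (0 : Fin 1))
            (fun z => R.data.map (idFiberEquiv z) s)))
        = R.data.mul (fun x : X => some x) (R.data.ract b' c)
          (fun x => R.data.map
            (fibSrc eW.symm
              (fpSnd (fun z : Fin 1 => some z) (fun _ : X => some (0 : Fin 1)))
              (fun x : X => some x) (fun _ => rfl) x)
            (R.data.atilde (fun z : Fin 1 => some z) (fun _ : X => some (0 : Fin 1))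
              (fun z => R.data.map (idFiberEquiv z) s) x)) :=
      aux_mul_src R eW.symm
        (fpSnd (fun z : Fin 1 => some z) (fun _ : X => some (0 : Fin 1)))
        (fun x : X => some x) (fun _ => rfl) (R.data.ract b' c)
        (R.data.atilde (fun z : Fin 1 => some z) (fun _ : X => some (0 : Fin 1))
          (fun z => R.data.map (idFiberEquiv z) s))
    refine hsrc.trans ?_
    -- the family is the constant family `s`
    have hfam : (fun x => R.data.map
        (fibSrc eW.symm (fpSnd (fun z : Fin 1 => some z) (fun _ : X => some (0 : Fin 1)))
          (fun x : X => some x) (fun _ => rfl) x)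
        (R.data.atilde (fun z : Fin 1 => some z) (fun _ : X => some (0 : Fin 1))
          (fun z => R.data.map (idFiberEquiv z) s) x))
        = fun x : X => R.data.map (idFiberEquiv x) s := by
      funext x
      rw [aux_atilde_eval R (fun z : Fin 1 => some z) (fun _ : X => some (0 : Fin 1))
        (fun z => R.data.map (idFiberEquiv z) s)
        (rfl : (fun _ : X => some (0 : Fin 1)) x = some 0)]
      rw [← R.map_trans, ← R.map_trans]
      exact aux_map_congr R (Equiv.ext fun z => Subtype.ext rfl) s
    rw [hfam]
    -- now use associativity of the diagonal action and the one-point computation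
    have h4a : R.data.mul (fun x : X => some x) (R.data.ract b' c)
        (fun x : X => R.data.map (idFiberEquiv x) s)
        = R.data.mul (pcomp (fun x : X => some x) (fun x : X => some x)) b'
          (R.data.emul (fun x : X => some x) (fun x : X => some x)
            (fun x => R.data.map (idFiberEquiv x) (c x))
            (fun x => R.data.map (idFiberEquiv x) s)) :=
      (R.assoc (fun x : X => some x) (fun x : X => some x) b'
        (fun x => R.data.map (idFiberEquiv x) (c x))
        (fun x => R.data.map (idFiberEquiv x) s)).symm
    refine h4a.trans ?_
    have h4b : ∀ x : X, R.data.emul (fun x' : X => some x') (fun x' : X => some x')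
        (fun x' => R.data.map (idFiberEquiv x') (c x'))
        (fun x' => R.data.map (idFiberEquiv x') s) x
        = R.data.map (idFiberEquiv x) (R.data.op (c x) s) := by
      intro x
      refine aux_prim R
        (fun (p p' : pfib (pcomp (fun x' : X => some x') (fun x' : X => some x')) x) =>
          Subtype.ext ((Option.some.inj (show some p.1 = some x from p.2)).trans
            (Option.some.inj (show some p'.1 = some x from p'.2)).symm))
        (fun (p p' : pfib (fun x' : X => some x') x) =>
          Subtype.ext ((Option.some.inj (show some p.1 = some x from p.2)).trans
            (Option.some.inj (show some p'.1 = some x from p'.2)).symm))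
        (idFiberEquiv x) (idFiberEquiv x)
        (resMap (fun x' : X => some x') (fun x' : X => some x') x) ?_ (c x) s _
        (fun q => (idFiberEquiv q.1).trans
          (resFiberEquiv (fun x' : X => some x') (fun x' : X => some x') x q))
        (fun q => (R.map_trans _ _ s).symm)
      intro p
      show Option.bind (some p.1) _ = _
      rw [Option.bind_some, dif_pos (show (fun x' : X => some x') p.1 = some x from p.2)]
      exact congrArg some (Subtype.ext (Option.some.inj p.2))
    exact congrArg _ (funext h4b)
  -- Step 3: transport the contraction to `X` and read it as a pairing
  have step2 := aux_contr_src R eW (fun _ : X => some (0 : Fin 1))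
    (fpFst (fun z : Fin 1 => some z) (fun _ : X => some (0 : Fin 1)))
    (fun w => congrArg some (Subsingleton.elim _ _))
    (R.data.map eW
      (R.data.mul (fpSnd (fun z : Fin 1 => some z) (fun _ : X => some (0 : Fin 1)))
        (R.data.ract b' c)
        (R.data.atilde (fun z : Fin 1 => some z) (fun _ : X => some (0 : Fin 1))
          (fun z => R.data.map (idFiberEquiv z) s))))
    (R.data.ctilde (fun z : Fin 1 => some z) (fun _ : X => some (0 : Fin 1))
      (fun z => R.data.map (constFiberEquiv X z) d))
  obtain ⟨d'', hd''⟩ := aux_contr_fin1 R (fun _ : X => some (0 : Fin 1)) (fun _ => rfl)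
    (R.data.map eW
      (R.data.mul (fpSnd (fun z : Fin 1 => some z) (fun _ : X => some (0 : Fin 1)))
        (R.data.ract b' c)
        (R.data.atilde (fun z : Fin 1 => some z) (fun _ : X => some (0 : Fin 1))
          (fun z => R.data.map (idFiberEquiv z) s))))
    (fun y => R.data.map
      (fibSrc eW (fun _ : X => some (0 : Fin 1))
        (fpFst (fun z : Fin 1 => some z) (fun _ : X => some (0 : Fin 1)))
        (fun w => congrArg some (Subsingleton.elim _ _)) y).symm
      (R.data.ctilde (fun z : Fin 1 => some z) (fun _ : X => some (0 : Fin 1))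
        (fun z => R.data.map (constFiberEquiv X z) d) y))
  refine ⟨d'', ?_⟩
  rw [step1, ← aux_map_map_symm R eW
    (R.data.mul (fpSnd (fun z : Fin 1 => some z) (fun _ : X => some (0 : Fin 1)))
      (R.data.ract b' c)
      (R.data.atilde (fun z : Fin 1 => some z) (fun _ : X => some (0 : Fin 1))
        (fun z => R.data.map (idFiberEquiv z) s))), step2, hd'', hmapV]

end MaxPrime7
/-- **Maximal proper `h`-ideals are prime.**  In any generalized ring, every maximal
proper `h`-ideal is a prime; that is, `Max(A) ⊆ spec(A)`. -/
theorem maximal_hIdeal_isPrime (R : GenRing) (m : Set (R.data.A (Fin 1)))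
    (hm : R.IsHIdeal m) (hproper : R.data.one ∉ m)
    (hmax : ∀ b : Set (R.data.A (Fin 1)), R.IsHIdeal b → R.data.one ∉ b → m ⊆ b → b = m) :
    R.IsPrimeH m := by
  refine ⟨hm, hproper, ?_⟩
  intro a b hab
  by_cases h1 : R.data.one ∈ {t : R.data.A (Fin 1) | R.data.op t b ∈ m}
  · right
    have hob : R.data.op R.data.one b ∈ m := h1
    rwa [aux_op_one R b] at hob
  · left
    have hFideal : R.IsHIdeal {t : R.data.A (Fin 1) | R.data.op t b ∈ m} := by
      intro X _ b' d c hc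
      obtain ⟨d'', hd''⟩ := aux_key R b' c d b
      show R.data.op (R.data.pair (R.data.ract b' c) d) b ∈ m
      rw [hd'']
      exact hm X b' d'' (fun x => R.data.op (c x) b) hc
    have hsub : m ⊆ {t : R.data.A (Fin 1) | R.data.op t b ∈ m} := fun x hx =>
      aux_mem_op R hm hx b
    have heq := hmax _ hFideal h1 hsub
    have ha : a ∈ {t : R.data.A (Fin 1) | R.data.op t b ∈ m} := hab
    rwa [heq] at ha

end
end

section
/- For any generalized ring A and any h-ideal 𝔞 of A, one has I(V(𝔞)) = √𝔞; that is, the intersection of all prime h-ideals containing 𝔞 equals {a ∈ A_{[1]} : aⁿ ∈ 𝔞 for some n > 0}. -/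
open scoped Classical

noncomputable section

section Radical

variable (R : GenRing)

lemma pfib_subsingleton {X Y : Type} (f : X → Option Y)
    (hf : ∀ x₁ x₂ y, f x₁ = some y → f x₂ = some y → x₁ = x₂) (y : Y) :
    Subsingleton (pfib f y) :=
  ⟨fun a b => Subtype.ext (hf _ _ y a.2 b.2)⟩

lemma map_eq_of_ss {X Y : Type} [Finite X] [Finite Y] [Subsingleton Y] (e e' : X ≃ Y)
    (a : R.data.A X) : R.data.map e a = R.data.map e' a := by
  have : e = e' := Equiv.ext fun x => Subsingleton.elim _ _
  rw [this]

lemma map_map {X Y Z : Type} [Finite X] [Finite Y] [Finite Z] (e : X ≃ Y) (e' : Y ≃ Z)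
    (a : R.data.A X) : R.data.map e' (R.data.map e a) = R.data.map (e.trans e') a :=
  (R.map_trans e e' a).symm

lemma map_ss_self {X : Type} [Finite X] [Subsingleton X] (e : X ≃ X) (a : R.data.A X) :
    R.data.map e a = a := by
  rw [map_eq_of_ss R e (Equiv.refl X), R.map_refl]

lemma mul_congr' {X Y : Type} [Finite X] [Finite Y] {f f' : X → Option Y} (h : f = f')
    (a : R.data.A Y) {b : ∀ y, R.data.A (pfib f y)} {b' : ∀ y, R.data.A (pfib f' y)}
    (hb : ∀ y, HEq (b y) (b' y)) : R.data.mul f a b = R.data.mul f' a b' := by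
  subst h
  have : b = b' := funext fun y => eq_of_heq (hb y)
  rw [this]

lemma contr_congr' {X Y : Type} [Finite X] [Finite Y] {f f' : X → Option Y} (h : f = f')
    (a : R.data.A X) {b : ∀ y, R.data.A (pfib f y)} {b' : ∀ y, R.data.A (pfib f' y)}
    (hb : ∀ y, HEq (b y) (b' y)) : R.data.contr f a b = R.data.contr f' a b' := by
  subst h
  have : b = b' := funext fun y => eq_of_heq (hb y)
  rw [this]

lemma heq_map_ss {S T T' : Type} [Finite S] [Finite T] [Finite T'] (h : T = T')
    [Subsingleton T'] (e : S ≃ T) (e' : S ≃ T') (a : R.data.A S) :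
    HEq (R.data.map e a) (R.data.map e' a) := by
  subst h
  exact heq_of_eq (map_eq_of_ss R e e' a)

lemma heq_map_pfib {S X Y : Type} [Finite S] [Finite X] [Finite Y] {f f' : X → Option Y}
    (h : f = f') {y : Y} (e : S ≃ pfib f y) (e' : S ≃ pfib f' y)
    (he : ∀ s, (e s).1 = (e' s).1) (a : R.data.A S) :
    HEq (R.data.map e a) (R.data.map e' a) := by
  subst h
  have : e = e' := Equiv.ext fun s => Subtype.ext (he s)
  rw [this]

/-- canonical identification of `S` with the fiber of a constant total map -/
def fullFibEquiv {S T : Type} (G : S → Option T) (t : T) (hG : ∀ s, G s = some t) :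
    S ≃ pfib G t where
  toFun s := ⟨s, hG s⟩
  invFun q := q.1
  left_inv _ := rfl
  right_inv q := Subtype.ext rfl

lemma mul_graph {P Q : Type} [Finite P] [Finite Q] (E : Q ≃ P) (f : P → Option Q)
    (hf : f = fun p => some (E.symm p)) (a : R.data.A Q) (v : ∀ q, R.data.A (pfib f q))
    (hv : ∀ q, ∃ κ : Fin 1 ≃ pfib f q, v q = R.data.map κ R.data.one) :
    R.data.mul f a v = R.data.map E a := by
  subst hf
  have hss : ∀ q, Subsingleton (pfib (fun p => some (E.symm p)) q) := fun q =>
    pfib_subsingleton _ (fun x₁ x₂ y h1 h2 =>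
      E.symm.injective ((Option.some.inj h1).trans (Option.some.inj h2).symm)) q
  have hvv : v = fun q => R.data.map (equivFiberEquiv E.symm q) R.data.one := by
    funext q
    obtain ⟨κ, hκ⟩ := hv q
    rw [hκ]
    haveI := hss q
    exact map_eq_of_ss R _ _ _
  rw [hvv]
  exact R.map_eq_mul E a

lemma contr_graph {P Q : Type} [Finite P] [Finite Q] (E : P ≃ Q) (f : P → Option Q)
    (hf : f = fun p => some (E p)) (a : R.data.A P) (v : ∀ q, R.data.A (pfib f q))
    (hv : ∀ q, ∃ κ : Fin 1 ≃ pfib f q, v q = R.data.map κ R.data.one) :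
    R.data.contr f a v = R.data.map E a := by
  subst hf
  have hss : ∀ q, Subsingleton (pfib (fun p => some (E p)) q) := fun q =>
    pfib_subsingleton _ (fun x₁ x₂ y h1 h2 =>
      E.injective ((Option.some.inj h1).trans (Option.some.inj h2).symm)) q
  have hvv : v = fun q => R.data.map (equivFiberEquiv E q) R.data.one := by
    funext q
    obtain ⟨κ, hκ⟩ := hv q
    rw [hκ]
    haveI := hss q
    exact map_eq_of_ss R _ _ _
  rw [hvv]
  exact R.map_eq_contr E a

lemma one_lact' {X : Type} [Finite X] (f : X → Option (Fin 1)) (hf : ∀ x, f x = some 0)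
    (v : ∀ z, R.data.A (pfib f z)) :
    R.data.mul f R.data.one v = R.data.map (fullFibEquiv f 0 hf).symm (v 0) := by
  have hfe : f = fun _ => some 0 := funext hf
  subst hfe
  have h1 : v = fun z => R.data.map (constFiberEquiv X z)
      (R.data.map (fullFibEquiv _ 0 hf).symm (v 0)) := by
    funext z
    obtain rfl : (0 : Fin 1) = z := Subsingleton.elim _ _
    rw [map_map]
    have h2 : ((fullFibEquiv (fun _ : X => some (0 : Fin 1)) 0 hf).symm.trans
        (constFiberEquiv X 0)) = Equiv.refl _ := Equiv.ext fun q => Subtype.ext rfl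
    rw [h2, R.map_refl]
  conv_lhs => rw [h1]
  exact R.one_lact X _

end Radical
section Radical2

variable (R : GenRing)

lemma atilde_eval {X Y Z : Type} [Finite X] [Finite Y] [Finite Z] (g : Z → Option Y)
    (f : X → Option Y) (a : ∀ y, R.data.A (pfib g y)) (x : X) {y : Y} (h : f x = some y) :
    R.data.atilde g f a x = R.data.map (fpFiberSnd g f h) (a y) := by
  unfold GenRingData.atilde
  split
  next y' h' =>
    obtain rfl : y = y' := Option.some.inj (h.symm.trans h')
    rfl
  next h' =>
    rw [h'] at h
    exact nomatch h

lemma ctilde_eval {X Y Z : Type} [Finite X] [Finite Y] [Finite Z] (g : Z → Option Y)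
    (f : X → Option Y) (c : ∀ y, R.data.A (pfib f y)) (z : Z) {y : Y} (h : g z = some y) :
    R.data.ctilde g f c z = R.data.map (fpFiberFst g f h) (c y) := by
  unfold GenRingData.ctilde
  split
  next y' h' =>
    obtain rfl : y = y' := Option.some.inj (h.symm.trans h')
    rfl
  next h' =>
    rw [h'] at h
    exact nomatch h

lemma lact_gen {S T : Type} [Finite S] [Finite T] [Subsingleton T] (κ : Fin 1 ≃ T)
    (G : S → Option T) (hG : ∀ s, G s = some (κ 0)) (v : ∀ t, R.data.A (pfib G t)) :
    R.data.mul G (R.data.map κ R.data.one) v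
      = R.data.map (fullFibEquiv G (κ 0) hG).symm (v (κ 0)) := by
  have hmc := (R.map_eq_contr κ R.data.one).symm
  rw [hmc]
  rw [R.right_lin G (fun z : Fin 1 => some (κ z)) R.data.one v
    (fun t => R.data.map (equivFiberEquiv κ t) R.data.one)]
  have hsnd : ∀ p : FP G (fun z : Fin 1 => some (κ z)),
      fpSnd G (fun z : Fin 1 => some (κ z)) p = some 0 :=
    fun p => congrArg some (Subsingleton.elim _ _)
  rw [one_lact' R _ hsnd]
  rw [atilde_eval R G (fun z : Fin 1 => some (κ z)) v 0 (rfl : some (κ 0) = some (κ 0))]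
  rw [map_map]
  have hρ : ∀ p : FP G (fun z : Fin 1 => some (κ z)),
      fpFst G (fun z : Fin 1 => some (κ z)) p = some p.1.1 := fun _ => rfl
  refine Eq.trans (contr_graph R
    (⟨fun p => p.1.1, fun s => ⟨(s, 0), ⟨κ 0, hG s, rfl⟩⟩,
      fun p => Subtype.ext (Prod.ext rfl (Subsingleton.elim _ _)),
      fun s => rfl⟩ : FP G (fun z : Fin 1 => some (κ z)) ≃ S)
    (fpFst G (fun z : Fin 1 => some (κ z))) rfl _ _ ?_) ?_
  · intro s
    rw [ctilde_eval R G (fun z : Fin 1 => some (κ z))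
      (fun t => R.data.map (equivFiberEquiv κ t) R.data.one) s (hG s), map_map]
    exact ⟨_, rfl⟩
  · rw [map_map]
    congr 1

end Radical2
section Radical3

/-- fiber identification used in `contr_point` -/
def pcompFibEquiv {W P T : Type} [Subsingleton T] (e : W ≃ P) (t₀ t : T) :
    pfib (pcomp (fun _ : W => some t₀) (fun p : P => some (e.symm p))) t
      ≃ pfib (fun _ : W => some t₀) t where
  toFun x := ⟨e.symm x.1, congrArg some (Subsingleton.elim t₀ t)⟩
  invFun w := ⟨e w.1, congrArg some (Subsingleton.elim t₀ t)⟩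
  left_inv x := Subtype.ext (by simp)
  right_inv w := Subtype.ext (by simp)

variable (R : GenRing)

lemma contr_point {W P T : Type} [Finite W] [Finite P] [Finite T] [Subsingleton T]
    (e : W ≃ P) (t₀ : T) (F : P → Option T) (hF : F = fun _ => some t₀)
    (a d : R.data.A W) (κT : Fin 1 ≃ T) (v : ∀ t, R.data.A (pfib F t))
    (hv : ∀ t, ∃ ξ : W ≃ pfib F t,
      v t = R.data.map ξ d ∧ ∀ x, (ξ x).1 = e x) :
    R.data.contr F (R.data.map e a) v = R.data.map κT (R.data.pair a d) := by
  subst hF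
  -- LHS
  rw [← R.map_eq_mul e a]
  have h1 : R.data.contr (fun _ : P => some t₀)
      (R.data.mul (fun y : P => some (e.symm y)) a
        (fun x => R.data.map (equivFiberEquiv e.symm x) R.data.one)) v
      = R.data.contr (fun _ : W => some t₀) a
          (R.data.econtr (fun _ : W => some t₀) (fun y : P => some (e.symm y)) v
            (fun x => R.data.map (equivFiberEquiv e.symm x) R.data.one)) :=
    R.right_adj (fun _ : W => some t₀) (fun y : P => some (e.symm y)) a v
      (fun x => R.data.map (equivFiberEquiv e.symm x) R.data.one)
  rw [h1]
  -- compute the econtr family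
  have hV : ∀ t, ∃ E1 : W ≃ pfib (fun _ : W => some t₀) t,
      R.data.econtr (fun _ : W => some t₀) (fun y : P => some (e.symm y)) v
        (fun x => R.data.map (equivFiberEquiv e.symm x) R.data.one) t
        = R.data.map E1 d ∧ ∀ x, (E1 x).1 = x := by
    intro t
    obtain ⟨ξ, hξ1, hξ2⟩ := hv t
    refine ⟨ξ.trans (pcompFibEquiv e t₀ t), ?_, ?_⟩
    · have hres : resMap (fun _ : W => some t₀) (fun y : P => some (e.symm y)) t
          = fun x => some (pcompFibEquiv e t₀ t x) := by
        funext x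
        simp only [resMap, Option.bind_some]
        rw [dif_pos (congrArg some (Subsingleton.elim t₀ t) :
          (fun _ : W => some t₀) (e.symm x.1) = some t)]
        rfl
      have hcg := contr_graph R (pcompFibEquiv e t₀ t)
        (resMap (fun _ : W => some t₀) (fun y : P => some (e.symm y)) t) hres (v t)
        (fun p => R.data.map
          (resFiberEquiv (fun _ : W => some t₀) (fun y : P => some (e.symm y)) t p)
          ((fun x => R.data.map (equivFiberEquiv e.symm x) R.data.one) p.1))
        (fun p => ⟨_, map_map R _ _ _⟩)
      show R.data.contr (resMap (fun _ : W => some t₀) (fun y : P => some (e.symm y)) t)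
        (v t) _ = _
      rw [hcg, hξ1]; exact map_map R _ _ _
    · intro x
      show e.symm (ξ x).1 = x
      rw [hξ2 x]
      exact e.symm_apply_apply x
  -- RHS
  rw [← R.map_eq_contr κT (R.data.pair a d)]
  show _ = R.data.contr (fun z : Fin 1 => some (κT z))
    (R.data.contr (fun _ : W => some (0:Fin 1)) a
      (fun z => R.data.map (constFiberEquiv W z) d))
    (fun t => R.data.map (equivFiberEquiv κT t) R.data.one)
  rw [← R.left_adj (fun z : Fin 1 => some (κT z)) (fun _ : W => some (0:Fin 1)) a
    (fun t => R.data.map (equivFiberEquiv κT t) R.data.one)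
    (fun z => R.data.map (constFiberEquiv W z) d)]
  -- compute the emul family
  have hVhat : ∀ t, ∃ E2 : W ≃
      pfib (pcomp (fun z : Fin 1 => some (κT z)) (fun _ : W => some (0:Fin 1))) t,
      R.data.emul (fun z : Fin 1 => some (κT z)) (fun _ : W => some (0:Fin 1))
        (fun t => R.data.map (equivFiberEquiv κT t) R.data.one)
        (fun z => R.data.map (constFiberEquiv W z) d) t
        = R.data.map E2 d ∧ ∀ x, (E2 x).1 = x := by
    intro t
    haveI : Subsingleton (pfib (fun z : Fin 1 => some (κT z)) t) :=
      pfib_subsingleton _ (fun x₁ x₂ y h1 h2 =>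
        κT.injective ((Option.some.inj h1).trans (Option.some.inj h2).symm)) t
    have hG : ∀ x : pfib (pcomp (fun z : Fin 1 => some (κT z))
        (fun _ : W => some (0:Fin 1))) t,
        resMap (fun z : Fin 1 => some (κT z)) (fun _ : W => some (0:Fin 1)) t x
          = some ((equivFiberEquiv κT t) 0) := by
      intro x
      simp only [resMap, Option.bind_some]
      rw [dif_pos (congrArg some (Subsingleton.elim (κT 0) t) :
        (fun z : Fin 1 => some (κT z)) 0 = some t)]
      exact congrArg some (Subtype.ext (Subsingleton.elim _ _))
    refine ⟨(constFiberEquiv W ((equivFiberEquiv κT t) 0).1).trans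
      ((resFiberEquiv (fun z : Fin 1 => some (κT z)) (fun _ : W => some (0:Fin 1)) t
        ((equivFiberEquiv κT t) 0)).trans
      (fullFibEquiv (resMap (fun z : Fin 1 => some (κT z)) (fun _ : W => some (0:Fin 1)) t)
        ((equivFiberEquiv κT t) 0) hG).symm), ?_, fun x => rfl⟩
    show R.data.mul
      (resMap (fun z : Fin 1 => some (κT z)) (fun _ : W => some (0:Fin 1)) t)
      (R.data.map (equivFiberEquiv κT t) R.data.one) _ = _
    rw [lact_gen R (equivFiberEquiv κT t) _ hG _]
    rw [map_map, map_map]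
  -- put the two sides together
  refine contr_congr' R ?_ a ?_
  · funext w
    exact (congrArg some (Subsingleton.elim t₀ (κT 0)) : (some t₀ : Option T) = some (κT 0))
  · intro t
    obtain ⟨E1, hE1, p1⟩ := hV t
    obtain ⟨E2, hE2, p2⟩ := hVhat t
    rw [hE1, hE2]
    refine heq_map_pfib R ?_ E1 E2 ?_ d
    · funext w
      exact (congrArg some (Subsingleton.elim t₀ (κT 0)) : (some t₀ : Option T) = some (κT 0))
    · intro s
      rw [p1 s, p2 s]

end Radical3
section Radical4

/-- fiber identification for the identity map versus the graph of an equivalence -/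
def idToGraphEquiv {W P : Type} (eP : W ≃ P) (w : W) :
    pfib (fun x : W => some x) w ≃ pfib (fun p : P => some (eP.symm p)) w where
  toFun x := ⟨eP x.1, by rw [show x.1 = w from Option.some.inj x.2]; simp⟩
  invFun p := ⟨eP.symm p.1, p.2⟩
  left_inv x := Subtype.ext (by simp)
  right_inv p := Subtype.ext (by simp)

variable (R : GenRing)

lemma ract_master {W P Q : Type} [Finite W] [Finite P] [Finite Q]
    (eQ : W ≃ Q) (eP : W ≃ P) (F : P → Option Q)
    (hF : F = fun p => some (eQ (eP.symm p)))
    (b : R.data.A W) (c : W → R.data.A (Fin 1)) (v : ∀ q, R.data.A (pfib F q))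
    (hv : ∀ q, ∃ κ : Fin 1 ≃ pfib F q, v q = R.data.map κ (c (eQ.symm q))) :
    R.data.mul F (R.data.map eQ b) v = R.data.map eP (R.data.ract b c) := by
  subst hF
  have hssP : ∀ w, Subsingleton (pfib (fun p : P => some (eP.symm p)) w) := fun w =>
    pfib_subsingleton _ (fun x₁ x₂ y h1 h2 =>
      eP.symm.injective ((Option.some.inj h1).trans (Option.some.inj h2).symm)) w
  have hpc : pcomp (fun q : Q => some (eQ.symm q))
      (fun p : P => some (eQ (eP.symm p))) = fun p : P => some (eP.symm p) := by
    funext p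
    exact congrArg some (eQ.symm_apply_apply _)
  -- RHS
  have hR1 : R.data.map eP (R.data.ract b c)
      = R.data.mul (fun p : P => some (eP.symm p))
          (R.data.mul (fun x : W => some x) b (fun x => R.data.map (idFiberEquiv x) (c x)))
          (fun x => R.data.map (equivFiberEquiv eP.symm x) R.data.one) :=
    (R.map_eq_mul eP _).symm
  have hR2 : R.data.mul (fun p : P => some (eP.symm p))
        (R.data.mul (fun x : W => some x) b (fun x => R.data.map (idFiberEquiv x) (c x)))
        (fun x => R.data.map (equivFiberEquiv eP.symm x) R.data.one)
      = R.data.mul (pcomp (fun x : W => some x) (fun p : P => some (eP.symm p))) b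
          (R.data.emul (fun x : W => some x) (fun p : P => some (eP.symm p))
            (fun x => R.data.map (idFiberEquiv x) (c x))
            (fun x => R.data.map (equivFiberEquiv eP.symm x) R.data.one)) :=
    (R.assoc (fun x : W => some x) (fun p : P => some (eP.symm p)) b _ _).symm
  have hV3 : ∀ w, ∃ E : Fin 1 ≃
      pfib (pcomp (fun x : W => some x) (fun p : P => some (eP.symm p))) w,
      R.data.emul (fun x : W => some x) (fun p : P => some (eP.symm p))
        (fun x => R.data.map (idFiberEquiv x) (c x))
        (fun x => R.data.map (equivFiberEquiv eP.symm x) R.data.one) w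
      = R.data.map E (c w) := by
    intro w
    have hres : resMap (fun x : W => some x) (fun p : P => some (eP.symm p)) w
        = fun p => some ((idToGraphEquiv eP w).symm p) := by
      funext p
      simp only [resMap, Option.bind_some]
      have hcond : some (eP.symm p.1) = some w := p.2
      rw [dif_pos hcond]
      rfl
    refine ⟨(idFiberEquiv w).trans (idToGraphEquiv eP w), ?_⟩
    show R.data.mul (resMap (fun x : W => some x) (fun p : P => some (eP.symm p)) w)
      (R.data.map (idFiberEquiv w) (c w)) _ = _
    exact (mul_graph R (idToGraphEquiv eP w) _ hres _ _ (fun p => ⟨_, map_map R _ _ _⟩)).trans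
      (map_map R _ _ _)
  -- LHS
  have hL1 : R.data.mul (fun p : P => some (eQ (eP.symm p))) (R.data.map eQ b) v
      = R.data.mul (fun p : P => some (eQ (eP.symm p)))
          (R.data.mul (fun q : Q => some (eQ.symm q)) b
            (fun x => R.data.map (equivFiberEquiv eQ.symm x) R.data.one)) v := by
    rw [R.map_eq_mul eQ b]
  have hL2 : R.data.mul (fun p : P => some (eQ (eP.symm p)))
        (R.data.mul (fun q : Q => some (eQ.symm q)) b
          (fun x => R.data.map (equivFiberEquiv eQ.symm x) R.data.one)) v
      = R.data.mul (pcomp (fun q : Q => some (eQ.symm q))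
          (fun p : P => some (eQ (eP.symm p)))) b
          (R.data.emul (fun q : Q => some (eQ.symm q)) (fun p : P => some (eQ (eP.symm p)))
            (fun x => R.data.map (equivFiberEquiv eQ.symm x) R.data.one) v) :=
    (R.assoc (fun q : Q => some (eQ.symm q)) (fun p : P => some (eQ (eP.symm p))) b _ _).symm
  have hW4 : ∀ w, ∃ E : Fin 1 ≃
      pfib (pcomp (fun q : Q => some (eQ.symm q)) (fun p : P => some (eQ (eP.symm p)))) w,
      R.data.emul (fun q : Q => some (eQ.symm q)) (fun p : P => some (eQ (eP.symm p)))
        (fun x => R.data.map (equivFiberEquiv eQ.symm x) R.data.one) v w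
      = R.data.map E (c w) := by
    intro w
    have hG : ∀ x : pfib (pcomp (fun q : Q => some (eQ.symm q))
        (fun p : P => some (eQ (eP.symm p)))) w,
        resMap (fun q : Q => some (eQ.symm q)) (fun p : P => some (eQ (eP.symm p))) w x
          = some ((equivFiberEquiv eQ.symm w) 0) := by
      intro x
      simp only [resMap, Option.bind_some]
      have hcond : some (eQ.symm (eQ (eP.symm x.1))) = some w := x.2
      rw [dif_pos hcond]
      refine congrArg some (Subtype.ext ?_)
      show eQ (eP.symm x.1) = eQ w
      have hx := Option.some.inj x.2
      simp only [Equiv.symm_apply_eq] at hx ⊢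
      rw [hx]
    obtain ⟨κ', hκ'⟩ := hv (eQ w)
    haveI : Subsingleton (pfib (fun q : Q => some (eQ.symm q)) w) :=
      pfib_subsingleton _ (fun x₁ x₂ y h1 h2 =>
        eQ.symm.injective ((Option.some.inj h1).trans (Option.some.inj h2).symm)) w
    have h5 := lact_gen R (equivFiberEquiv eQ.symm w)
      (resMap (fun q : Q => some (eQ.symm q)) (fun p : P => some (eQ (eP.symm p))) w) hG
      (fun p => R.data.map (resFiberEquiv (fun q : Q => some (eQ.symm q))
        (fun p : P => some (eQ (eP.symm p))) w p) (v p.1))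
    refine ⟨κ'.trans ((resFiberEquiv (fun q : Q => some (eQ.symm q))
      (fun p : P => some (eQ (eP.symm p))) w ((equivFiberEquiv eQ.symm w) 0)).trans
      (fullFibEquiv (resMap (fun q : Q => some (eQ.symm q))
        (fun p : P => some (eQ (eP.symm p))) w) ((equivFiberEquiv eQ.symm w) 0) hG).symm), ?_⟩
    show R.data.mul
      (resMap (fun q : Q => some (eQ.symm q)) (fun p : P => some (eQ (eP.symm p))) w)
      (R.data.map (equivFiberEquiv eQ.symm w) R.data.one)
      (fun p => R.data.map (resFiberEquiv (fun q : Q => some (eQ.symm q))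
        (fun p : P => some (eQ (eP.symm p))) w p) (v p.1)) = _
    rw [h5]
    show R.data.map _ (R.data.map _ (v (eQ w))) = _
    rw [hκ', eQ.symm_apply_apply]; exact (map_map R _ _ _).trans (map_map R _ _ _)
  -- combine
  rw [hL1, hL2, hR1, hR2]
  refine mul_congr' R ?_ b ?_
  · rw [hpc]
    funext p
    exact congrArg some rfl
  · intro w
    obtain ⟨E1, h1⟩ := hW4 w
    obtain ⟨E2, h2⟩ := hV3 w
    rw [h1, h2]
    haveI : Subsingleton (pfib (pcomp (fun x : W => some x)
        (fun p : P => some (eP.symm p))) w) := hssP w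
    refine heq_map_ss R ?_ E1 E2 (c w)
    rw [hpc]
    rfl

end Radical4
section Radical5

variable (R : GenRing)

lemma op_nat {S T : Type} [Finite S] [Finite T] [Subsingleton S] [Subsingleton T]
    (φ : S ≃ T) (F : S → Option T) (hF : F = fun s => some (φ s))
    (κ : Fin 1 ≃ T) (u v : R.data.A (Fin 1)) (w : ∀ t, R.data.A (pfib F t))
    (hw : ∀ t, ∃ μ : Fin 1 ≃ pfib F t, w t = R.data.map μ v) (κ' : Fin 1 ≃ S) :
    R.data.mul F (R.data.map κ u) w = R.data.map κ' (R.data.op u v) := by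
  subst hF
  -- left side
  rw [← R.map_eq_mul κ u]
  have hA : R.data.mul (fun s : S => some (φ s))
      (R.data.mul (fun t : T => some (κ.symm t)) u
        (fun x => R.data.map (equivFiberEquiv κ.symm x) R.data.one)) w
      = R.data.mul (pcomp (fun t : T => some (κ.symm t)) (fun s : S => some (φ s))) u
        (R.data.emul (fun t : T => some (κ.symm t)) (fun s : S => some (φ s))
          (fun x => R.data.map (equivFiberEquiv κ.symm x) R.data.one) w) :=
    (R.assoc (fun t : T => some (κ.symm t)) (fun s : S => some (φ s)) u _ _).symm
  rw [hA]
  have hL : ∀ z, ∃ E : Fin 1 ≃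
      pfib (pcomp (fun t : T => some (κ.symm t)) (fun s : S => some (φ s))) z,
      R.data.emul (fun t : T => some (κ.symm t)) (fun s : S => some (φ s))
        (fun x => R.data.map (equivFiberEquiv κ.symm x) R.data.one) w z
      = R.data.map E v := by
    intro z
    haveI : Subsingleton (pfib (fun t : T => some (κ.symm t)) z) :=
      pfib_subsingleton _ (fun x₁ x₂ y h1 h2 =>
        κ.symm.injective ((Option.some.inj h1).trans (Option.some.inj h2).symm)) z
    have hG : ∀ x : pfib (pcomp (fun t : T => some (κ.symm t))
        (fun s : S => some (φ s))) z,
        resMap (fun t : T => some (κ.symm t)) (fun s : S => some (φ s)) z x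
          = some ((equivFiberEquiv κ.symm z) 0) := by
      intro x
      simp only [resMap, Option.bind_some]
      have hcond : some (κ.symm (φ x.1)) = some z :=
        congrArg some (Subsingleton.elim _ _)
      rw [dif_pos hcond]
      exact congrArg some (Subtype.ext (Subsingleton.elim _ _))
    obtain ⟨μ, hμ⟩ := hw ((equivFiberEquiv κ.symm z) 0).1
    have h5 := lact_gen R (equivFiberEquiv κ.symm z)
      (resMap (fun t : T => some (κ.symm t)) (fun s : S => some (φ s)) z) hG
      (fun p => R.data.map (resFiberEquiv (fun t : T => some (κ.symm t))
        (fun s : S => some (φ s)) z p) (w p.1))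
    refine ⟨μ.trans ((resFiberEquiv (fun t : T => some (κ.symm t))
      (fun s : S => some (φ s)) z ((equivFiberEquiv κ.symm z) 0)).trans
      (fullFibEquiv (resMap (fun t : T => some (κ.symm t)) (fun s : S => some (φ s)) z)
        ((equivFiberEquiv κ.symm z) 0) hG).symm), ?_⟩
    show R.data.mul
      (resMap (fun t : T => some (κ.symm t)) (fun s : S => some (φ s)) z)
      (R.data.map (equivFiberEquiv κ.symm z) R.data.one)
      (fun p => R.data.map (resFiberEquiv (fun t : T => some (κ.symm t))
        (fun s : S => some (φ s)) z p) (w p.1)) = _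
    rw [h5]
    show R.data.map _ (R.data.map _ (w ((equivFiberEquiv κ.symm z) 0).1)) = _
    rw [hμ, map_map, map_map]
  -- right side
  rw [← R.map_eq_mul κ' (R.data.op u v)]
  have hB : R.data.mul (fun s : S => some (κ'.symm s))
      (R.data.mul (fun z : Fin 1 => some z) u (fun z => R.data.map (idFiberEquiv z) v))
      (fun x => R.data.map (equivFiberEquiv κ'.symm x) R.data.one)
      = R.data.mul (pcomp (fun z : Fin 1 => some z) (fun s : S => some (κ'.symm s))) u
        (R.data.emul (fun z : Fin 1 => some z) (fun s : S => some (κ'.symm s))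
          (fun z => R.data.map (idFiberEquiv z) v)
          (fun x => R.data.map (equivFiberEquiv κ'.symm x) R.data.one)) :=
    (R.assoc (fun z : Fin 1 => some z) (fun s : S => some (κ'.symm s)) u _ _).symm
  rw [show R.data.op u v = R.data.mul (fun z : Fin 1 => some z) u
    (fun z => R.data.map (idFiberEquiv z) v) from rfl, hB]
  have hR : ∀ z, ∃ E : Fin 1 ≃
      pfib (pcomp (fun z : Fin 1 => some z) (fun s : S => some (κ'.symm s))) z,
      R.data.emul (fun z : Fin 1 => some z) (fun s : S => some (κ'.symm s))
        (fun z => R.data.map (idFiberEquiv z) v)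
        (fun x => R.data.map (equivFiberEquiv κ'.symm x) R.data.one) z
      = R.data.map E v := by
    intro z
    haveI : Subsingleton (pfib (pcomp (fun z : Fin 1 => some z)
        (fun s : S => some (κ'.symm s))) z) :=
      ⟨fun a b => Subtype.ext (Subsingleton.elim _ _)⟩
    haveI : Subsingleton (pfib (fun z : Fin 1 => some z) z) :=
      ⟨fun a b => Subtype.ext (Subsingleton.elim _ _)⟩
    have hres : resMap (fun z : Fin 1 => some z) (fun s : S => some (κ'.symm s)) z
        = fun p => some ((equivOfSubsingletonOfSubsingleton
            (fun _ : pfib (pcomp (fun z : Fin 1 => some z)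
              (fun s : S => some (κ'.symm s))) z =>
              (⟨z, rfl⟩ : pfib (fun z : Fin 1 => some z) z))
            (fun x => ⟨κ' x.1, congrArg some (Subsingleton.elim _ _)⟩)).symm.symm p) := by
      funext p
      simp only [resMap, Option.bind_some]
      have hcond : some (κ'.symm p.1) = some z := congrArg some (Subsingleton.elim _ _)
      rw [dif_pos hcond]
      exact congrArg some (Subtype.ext (Subsingleton.elim _ _))
    refine ⟨(idFiberEquiv z).trans (equivOfSubsingletonOfSubsingleton
      (fun _ : pfib (pcomp (fun z : Fin 1 => some z)
        (fun s : S => some (κ'.symm s))) z =>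
        (⟨z, rfl⟩ : pfib (fun z : Fin 1 => some z) z))
      (fun x => ⟨κ' x.1, congrArg some (Subsingleton.elim _ _)⟩)).symm, ?_⟩
    show R.data.mul
      (resMap (fun z : Fin 1 => some z) (fun s : S => some (κ'.symm s)) z)
      (R.data.map (idFiberEquiv z) v)
      (fun p => R.data.map (resFiberEquiv (fun z : Fin 1 => some z)
        (fun s : S => some (κ'.symm s)) z p)
        ((fun x => R.data.map (equivFiberEquiv κ'.symm x) R.data.one) p.1)) = _
    rw [mul_graph R _ _ hres _ _ (fun p => ⟨_, map_map R _ _ _⟩), map_map]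
  -- combine
  refine mul_congr' R ?_ u ?_
  · funext s
    exact (congrArg some (Subsingleton.elim _ _) :
      (some (κ.symm (φ s)) : Option (Fin 1)) = some (κ'.symm s))
  · intro z
    obtain ⟨E1, h1⟩ := hL z
    obtain ⟨E2, h2⟩ := hR z
    rw [h1, h2]
    haveI : Subsingleton (pfib (pcomp (fun z : Fin 1 => some z)
        (fun s : S => some (κ'.symm s))) z) :=
      ⟨fun a b => Subtype.ext (Subsingleton.elim _ _)⟩
    refine heq_map_ss R ?_ E1 E2 v
    have : (pcomp (fun t : T => some (κ.symm t)) (fun s : S => some (φ s)))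
        = (pcomp (fun z : Fin 1 => some z) (fun s : S => some (κ'.symm s))) := by
      funext s
      exact (congrArg some (Subsingleton.elim _ _) :
        (some (κ.symm (φ s)) : Option (Fin 1)) = some (κ'.symm s))
    rw [this]

lemma op_one (aa : R.data.A (Fin 1)) : R.data.op aa R.data.one = aa :=
  R.mul_one_id (Fin 1) aa

lemma one_op (aa : R.data.A (Fin 1)) : R.data.op R.data.one aa = aa := by
  have h := one_lact' R (fun z : Fin 1 => some z)
    (fun z => congrArg some (Subsingleton.elim z 0))
    (fun z => R.data.map (idFiberEquiv z) aa)
  calc R.data.op R.data.one aa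
      = R.data.map (fullFibEquiv (fun z : Fin 1 => some z) 0
          (fun z => congrArg some (Subsingleton.elim z 0))).symm
          (R.data.map (idFiberEquiv 0) aa) := h
    _ = aa := by rw [map_map]; exact map_ss_self R _ aa

lemma op_assoc (aa bb cc : R.data.A (Fin 1)) :
    R.data.op (R.data.op aa bb) cc = R.data.op aa (R.data.op bb cc) := by
  have hB : R.data.op (R.data.op aa bb) cc
      = R.data.mul (pcomp (fun z : Fin 1 => some z) (fun z : Fin 1 => some z)) aa
          (R.data.emul (fun z : Fin 1 => some z) (fun z : Fin 1 => some z)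
            (fun z => R.data.map (idFiberEquiv z) bb)
            (fun z => R.data.map (idFiberEquiv z) cc)) :=
    (R.assoc (fun z : Fin 1 => some z) (fun z : Fin 1 => some z) aa _ _).symm
  rw [hB]
  have hfam : ∀ z, R.data.emul (fun z : Fin 1 => some z) (fun z : Fin 1 => some z)
      (fun z => R.data.map (idFiberEquiv z) bb)
      (fun z => R.data.map (idFiberEquiv z) cc) z
      = R.data.map (idFiberEquiv z) (R.data.op bb cc) := by
    intro z
    haveI : Subsingleton (pfib (fun z : Fin 1 => some z) z) :=
      ⟨fun a b => Subtype.ext (Subsingleton.elim _ _)⟩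
    exact op_nat R (Equiv.refl _) (resMap (fun z : Fin 1 => some z)
      (fun z : Fin 1 => some z) z)
      (by
        funext p
        simp only [resMap, Option.bind_some]
        have hcond : some p.1 = some z := p.2
        rw [dif_pos hcond]
        exact congrArg some (Subtype.ext (Subsingleton.elim _ _)))
      (idFiberEquiv z) bb cc _
      (fun t => ⟨_, map_map R _ _ _⟩) (idFiberEquiv z)
  show R.data.mul (fun z : Fin 1 => some z) aa _
      = R.data.mul (fun z : Fin 1 => some z) aa _
  exact congrArg _ (funext hfam)

end Radical5
section Radical6

/-- diagonal identification of `X` with the fibered product `[1] ×_{[1]} X` -/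
def diagFPEquiv (X : Type) :
    X ≃ FP (fun z : Fin 1 => some z) (fun _ : X => some (0 : Fin 1)) where
  toFun x := ⟨(0, x), ⟨0, rfl, rfl⟩⟩
  invFun p := p.1.2
  left_inv _ := rfl
  right_inv p := Subtype.ext (Prod.ext (Subsingleton.elim _ _) rfl)

variable (R : GenRing)

lemma pair_one (Q : R.data.A (Fin 1)) : R.data.pair Q R.data.one = Q := by
  have h := contr_graph R (Equiv.refl (Fin 1)) (fun _ : Fin 1 => some (0 : Fin 1))
    (funext fun z => congrArg some (Subsingleton.elim (0 : Fin 1) z)) Q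
    (fun z => R.data.map (constFiberEquiv (Fin 1) z) R.data.one) (fun z => ⟨_, rfl⟩)
  calc R.data.pair Q R.data.one = R.data.map (Equiv.refl (Fin 1)) Q := h
    _ = Q := R.map_refl _ Q

lemma lact_one_fin (s : R.data.A (Fin 1)) : R.data.lact s R.data.one = s := by
  have h := mul_graph R (Equiv.refl (Fin 1)) (fun _ : Fin 1 => some (0 : Fin 1))
    (funext fun z => congrArg some (Subsingleton.elim (0 : Fin 1) z)) s
    (fun z => R.data.map (constFiberEquiv (Fin 1) z) R.data.one) (fun z => ⟨_, rfl⟩)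
  calc R.data.lact s R.data.one = R.data.map (Equiv.refl (Fin 1)) s := h
    _ = s := R.map_refl _ s

lemma contr_id_pair (s Q : R.data.A (Fin 1)) :
    R.data.contr (fun z : Fin 1 => some z) s (fun z => R.data.map (idFiberEquiv z) Q)
      = R.data.pair s Q := by
  have hfe : (fun z : Fin 1 => some z) = (fun _ : Fin 1 => some (0 : Fin 1)) :=
    funext fun z => congrArg some (Subsingleton.elim z 0)
  show _ = R.data.contr (fun _ : Fin 1 => some (0 : Fin 1)) s
    (fun z => R.data.map (constFiberEquiv (Fin 1) z) Q)
  refine contr_congr' R hfe s ?_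
  intro z
  haveI : Subsingleton (pfib (fun _ : Fin 1 => some (0 : Fin 1)) z) :=
    ⟨fun a b => Subtype.ext (Subsingleton.elim _ _)⟩
  refine heq_map_ss R ?_ _ _ Q
  rw [hfe]

lemma econtr_diag {X : Type} [Finite X] (D P0 : R.data.A X) :
    R.data.econtr (fun z : Fin 1 => some z) (fun _ : X => some (0 : Fin 1))
      (fun z => R.data.map (constFiberEquiv X z) D)
      (fun z => R.data.map (constFiberEquiv X z) P0)
    = fun z => R.data.map (idFiberEquiv z) (R.data.pair D P0) := by
  funext z
  have hF : resMap (fun z : Fin 1 => some z) (fun _ : X => some (0 : Fin 1)) z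
      = fun _ => some (⟨z, rfl⟩ : pfib (fun z : Fin 1 => some z) z) := by
    funext p
    simp only [resMap, Option.bind_some]
    have hcond : (some (0 : Fin 1)) = some z := congrArg some (Subsingleton.elim _ _)
    rw [dif_pos hcond]
    exact congrArg some (Subtype.ext (Subsingleton.elim _ _))
  haveI : Subsingleton (pfib (fun z : Fin 1 => some z) z) :=
    ⟨fun a b => Subtype.ext (Subsingleton.elim _ _)⟩
  refine contr_point R (constFiberEquiv X z)
    (⟨z, rfl⟩ : pfib (fun z : Fin 1 => some z) z) _ hF D P0 (idFiberEquiv z) _ ?_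
  intro t
  refine ⟨(constFiberEquiv X t.1).trans
    (resFiberEquiv (fun z : Fin 1 => some z) (fun _ : X => some (0 : Fin 1)) z t), ?_, ?_⟩
  · show R.data.map _ (R.data.map (constFiberEquiv X t.1) P0) = _
    exact map_map R _ _ _
  · intro x
    exact Subtype.ext rfl

lemma op_pair_left (s : R.data.A (Fin 1)) {X : Type} [Finite X] (D P0 : R.data.A X) :
    R.data.op s (R.data.pair D P0) = R.data.pair (R.data.lact s D) P0 := by
  show R.data.mul (fun z : Fin 1 => some z) s
    (fun z => R.data.map (idFiberEquiv z) (R.data.pair D P0)) = _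
  rw [← econtr_diag R D P0]
  exact (R.left_lin (fun z : Fin 1 => some z) (fun _ : X => some (0 : Fin 1)) s
    (fun z => R.data.map (constFiberEquiv X z) D)
    (fun z => R.data.map (constFiberEquiv X z) P0)).symm

lemma pair_assoc (s : R.data.A (Fin 1)) {X : Type} [Finite X] (D P0 : R.data.A X) :
    R.data.pair (R.data.lact s P0) D = R.data.pair s (R.data.pair D P0) := by
  have h := R.right_adj (fun z : Fin 1 => some z) (fun _ : X => some (0 : Fin 1)) s
    (fun z => R.data.map (constFiberEquiv X z) D)
    (fun z => R.data.map (constFiberEquiv X z) P0)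
  calc R.data.pair (R.data.lact s P0) D
      = R.data.contr (fun z : Fin 1 => some z) s
          (R.data.econtr (fun z : Fin 1 => some z) (fun _ : X => some (0 : Fin 1))
            (fun z => R.data.map (constFiberEquiv X z) D)
            (fun z => R.data.map (constFiberEquiv X z) P0)) := h
    _ = R.data.pair s (R.data.pair D P0) := by
        rw [econtr_diag R D P0]
        exact contr_id_pair R s (R.data.pair D P0)

lemma adj_invol (D : R.data.A (Fin 1)) : R.data.adj (R.data.adj D) = D := by
  show R.data.pair R.data.one (R.data.pair R.data.one D) = D
  rw [← pair_assoc R R.data.one R.data.one D, R.one_lact (Fin 1) D, pair_one]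

lemma op_adj_right (s D : R.data.A (Fin 1)) :
    R.data.op s (R.data.adj D) = R.data.pair s D := by
  show R.data.op s (R.data.pair R.data.one D) = _
  rw [op_pair_left R s R.data.one D, lact_one_fin]

lemma op_pair {X : Type} [Finite X] (d D : R.data.A X) (t : R.data.A (Fin 1)) :
    R.data.op (R.data.pair d D) t
      = R.data.pair (R.data.ract d (fun _ : X => t)) D := by
  have h0 : R.data.op (R.data.pair d D) t
      = R.data.contr (fpFst (fun z : Fin 1 => some z) (fun _ : X => some (0 : Fin 1)))
          (R.data.mul (fpSnd (fun z : Fin 1 => some z) (fun _ : X => some (0 : Fin 1))) d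
            (R.data.atilde (fun z : Fin 1 => some z) (fun _ : X => some (0 : Fin 1))
              (fun z => R.data.map (idFiberEquiv z) t)))
          (R.data.ctilde (fun z : Fin 1 => some z) (fun _ : X => some (0 : Fin 1))
            (fun z => R.data.map (constFiberEquiv X z) D)) :=
    R.right_lin (fun z : Fin 1 => some z) (fun _ : X => some (0 : Fin 1)) d
      (fun z => R.data.map (idFiberEquiv z) t)
      (fun z => R.data.map (constFiberEquiv X z) D)
  rw [h0]
  have hinner : R.data.mul
      (fpSnd (fun z : Fin 1 => some z) (fun _ : X => some (0 : Fin 1))) d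
      (R.data.atilde (fun z : Fin 1 => some z) (fun _ : X => some (0 : Fin 1))
        (fun z => R.data.map (idFiberEquiv z) t))
      = R.data.map (diagFPEquiv X) (R.data.ract d (fun _ : X => t)) := by
    conv_lhs => rw [← R.map_refl X d]
    refine ract_master R (Equiv.refl X) (diagFPEquiv X) _ ?_ d (fun _ : X => t) _ ?_
    · funext p
      rfl
    · intro q
      refine ⟨(idFiberEquiv 0).trans
        (@fpFiberSnd X (Fin 1) (Fin 1) (fun z : Fin 1 => some z)
          (fun _ : X => some (0 : Fin 1)) q 0 rfl), ?_⟩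
      rw [atilde_eval R (fun z : Fin 1 => some z) (fun _ : X => some (0 : Fin 1))
        (fun z => R.data.map (idFiberEquiv z) t) q (rfl : some (0 : Fin 1) = some 0)]
      rw [map_map]
  rw [hinner]
  have hout := contr_point R (diagFPEquiv X) (0 : Fin 1)
    (fpFst (fun z : Fin 1 => some z) (fun _ : X => some (0 : Fin 1)))
    (funext fun p => congrArg some (Subsingleton.elim p.1.1 0))
    (R.data.ract d (fun _ : X => t)) D (Equiv.refl (Fin 1))
    (R.data.ctilde (fun z : Fin 1 => some z) (fun _ : X => some (0 : Fin 1))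
      (fun z => R.data.map (constFiberEquiv X z) D)) ?_
  · rw [hout, R.map_refl]
  · intro z
    refine ⟨(constFiberEquiv X z).trans
      (fpFiberFst (fun z : Fin 1 => some z) (fun _ : X => some (0 : Fin 1))
        (rfl : some z = some z)), ?_, ?_⟩
    · rw [ctilde_eval R (fun z : Fin 1 => some z) (fun _ : X => some (0 : Fin 1))
        (fun z => R.data.map (constFiberEquiv X z) D) z (rfl : some z = some z)]
      rw [map_map]
    · intro x
      exact Subtype.ext (Prod.ext (Subsingleton.elim _ _) rfl)

lemma adj_op_left (D tt : R.data.A (Fin 1)) :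
    R.data.op (R.data.adj D) tt = R.data.pair tt D := by
  show R.data.op (R.data.pair R.data.one D) tt = _
  rw [op_pair R R.data.one D tt]
  have h : R.data.ract R.data.one (fun _ : Fin 1 => tt) = tt := one_op R tt
  rw [h]

lemma op_comm (s t : R.data.A (Fin 1)) : R.data.op s t = R.data.op t s := by
  have h1 : R.data.op s t = R.data.pair s (R.data.adj t) := by
    have := op_adj_right R s (R.data.adj t)
    rwa [adj_invol] at this
  have h2 : R.data.op t s = R.data.pair s (R.data.adj t) := by
    have := adj_op_left R (R.data.adj t) s
    rwa [adj_invol] at this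
  rw [h1, h2]

lemma double_ract {X : Type} [Finite X] (b : R.data.A X) (c c' : X → R.data.A (Fin 1)) :
    R.data.ract (R.data.ract b c) c'
      = R.data.ract b (fun x => R.data.op (c x) (c' x)) := by
  have hB : R.data.ract (R.data.ract b c) c'
      = R.data.mul (pcomp (fun x : X => some x) (fun x : X => some x)) b
          (R.data.emul (fun x : X => some x) (fun x : X => some x)
            (fun x => R.data.map (idFiberEquiv x) (c x))
            (fun x => R.data.map (idFiberEquiv x) (c' x))) :=
    (R.assoc (fun x : X => some x) (fun x : X => some x) b _ _).symm
  rw [hB]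
  have hfam : ∀ x, R.data.emul (fun x : X => some x) (fun x : X => some x)
      (fun x => R.data.map (idFiberEquiv x) (c x))
      (fun x => R.data.map (idFiberEquiv x) (c' x)) x
      = R.data.map (idFiberEquiv x) (R.data.op (c x) (c' x)) := by
    intro x
    haveI h1 : Subsingleton (pfib (fun x : X => some x) x) :=
      pfib_subsingleton _ (fun x₁ x₂ y h1 h2 =>
        (Option.some.inj h1).trans (Option.some.inj h2).symm) x
    haveI h2 : Subsingleton (pfib (pcomp (fun x : X => some x) (fun x : X => some x)) x) :=
      ⟨fun a b => Subtype.ext ((Option.some.inj a.2).trans (Option.some.inj b.2).symm)⟩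
    refine op_nat R (equivOfSubsingletonOfSubsingleton
        (fun q => ⟨q.1, q.2⟩) (fun q => ⟨q.1, q.2⟩))
      (resMap (fun x : X => some x) (fun x : X => some x) x) ?_
      (idFiberEquiv x) (c x) (c' x) _ ?_ (idFiberEquiv x)
    · funext p
      simp only [resMap, Option.bind_some]
      have hcond : some p.1 = some x := p.2
      rw [dif_pos hcond]
      rfl
    · intro tt
      have hidx : c' tt.1 = c' x := congrArg c' (Option.some.inj tt.2)
      refine ⟨(idFiberEquiv tt.1).trans
        (resFiberEquiv (fun x : X => some x) (fun x : X => some x) x tt), ?_⟩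
      show R.data.map _ (R.data.map (idFiberEquiv tt.1) (c' tt.1)) = _
      rw [map_map, hidx]
  show R.data.mul (fun x : X => some x) b _ = R.data.mul (fun x : X => some x) b _
  exact congrArg _ (funext hfam)

end Radical6
section Radical7

variable (R : GenRing)

lemma zero_mem_hIdeal {I : Set (R.data.A (Fin 1))} (hI : R.IsHIdeal I) :
    R.data.zero (Fin 1) ∈ I := by
  have h := hI Empty (R.data.zero Empty) (R.data.zero Empty)
    (fun x => x.elim) (fun x => x.elim)
  have e1 : R.data.ract (R.data.zero Empty) (fun x : Empty => x.elim)
      = R.data.zero Empty := R.mul_zero_left _ _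
  rw [e1] at h
  have e2 : R.data.pair (R.data.zero Empty) (R.data.zero Empty)
      = R.data.zero (Fin 1) := R.contr_zero_left _ _
  rwa [e2] at h

lemma op_mem_hIdeal_right {I : Set (R.data.A (Fin 1))} (hI : R.IsHIdeal I)
    {m : R.data.A (Fin 1)} (hm : m ∈ I) (t : R.data.A (Fin 1)) : R.data.op t m ∈ I := by
  have h := hI (Fin 1) t R.data.one (fun _ => m) (fun _ => hm)
  have h' : R.data.pair (R.data.op t m) R.data.one ∈ I := h
  rwa [pair_one] at h'

lemma op_mem_hIdeal_left {I : Set (R.data.A (Fin 1))} (hI : R.IsHIdeal I)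
    {m : R.data.A (Fin 1)} (hm : m ∈ I) (t : R.data.A (Fin 1)) : R.data.op m t ∈ I := by
  rw [op_comm]
  exact op_mem_hIdeal_right R hI hm t

lemma univ_of_one_mem {I : Set (R.data.A (Fin 1))} (hI : R.IsHIdeal I)
    (h1 : R.data.one ∈ I) (aa : R.data.A (Fin 1)) : aa ∈ I := by
  have h := op_mem_hIdeal_right R hI h1 aa
  rwa [op_one] at h

/-- the `h`-ideal generated by a subset `E ⊆ A_{[1]}` -/
def genIdeal (E : Set (R.data.A (Fin 1))) : Set (R.data.A (Fin 1)) :=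
  {t | ∃ (X : Type) (inst : Finite X), ∃ b d : @GenRingData.A R.data X inst,
    ∃ c : X → R.data.A (Fin 1), (∀ x, c x ∈ E) ∧
      @GenRingData.pair R.data X inst (@GenRingData.ract R.data X inst b c) d = t}

lemma genIdeal_subset {I : Set (R.data.A (Fin 1))} (hI : R.IsHIdeal I)
    {E : Set (R.data.A (Fin 1))} (hE : E ⊆ I) : genIdeal R E ⊆ I := by
  rintro t ⟨X, inst, b, d, c, hc, ht⟩
  haveI := inst
  subst ht
  exact hI X b d c (fun x => hE (hc x))

lemma subset_genIdeal (E : Set (R.data.A (Fin 1))) : E ⊆ genIdeal R E := by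
  intro e he
  refine ⟨Fin 1, inferInstance, R.data.one, R.data.one, fun _ => e, fun _ => he, ?_⟩
  have h1 : R.data.ract R.data.one (fun _ : Fin 1 => e) = e := one_op R e
  rw [h1, pair_one]

lemma opPow_one' (x : R.data.A (Fin 1)) : R.data.opPow x 1 = x := by
  show R.data.op x (R.data.opPow x 0) = x
  show R.data.op x R.data.one = x
  exact op_one R x

lemma opPow_add (x : R.data.A (Fin 1)) (n m : ℕ) :
    R.data.opPow x (n + m) = R.data.op (R.data.opPow x n) (R.data.opPow x m) := by
  induction n with
  | zero =>
      rw [Nat.zero_add]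
      show _ = R.data.op R.data.one _
      rw [one_op]
  | succ n ih =>
      rw [Nat.succ_add]
      show R.data.op x (R.data.opPow x (n + m)) = _
      rw [ih, ← op_assoc]
      rfl

end Radical7
section Radical8

/-- identification of `XX y` with the fiber over `y` of the projection of the sigma type -/
def sigmaFibEquiv {Y : Type} (XX : Y → Type) (y : Y) :
    XX y ≃ pfib (fun p : (y' : Y) × XX y' => some p.1) y where
  toFun t := ⟨⟨y, t⟩, rfl⟩
  invFun q := (Option.some.inj q.2) ▸ q.1.2
  left_inv t := rfl
  right_inv q := by
    obtain ⟨⟨y', t⟩, hq⟩ := q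
    obtain rfl : y = y' := (Option.some.inj hq).symm
    rfl

variable (R : GenRing)

lemma contr_to_pair {X : Type} [Finite X] (a0 : R.data.A X)
    (v : ∀ z, R.data.A (pfib (fun _ : X => some (0 : Fin 1)) z)) :
    R.data.contr (fun _ : X => some (0 : Fin 1)) a0 v
      = R.data.pair a0 (R.data.map (constFiberEquiv X 0).symm (v 0)) := by
  show _ = R.data.contr (fun _ : X => some (0 : Fin 1)) a0
    (fun z => R.data.map (constFiberEquiv X z)
      (R.data.map (constFiberEquiv X 0).symm (v 0)))
  congr 1
  funext z
  obtain rfl : (0 : Fin 1) = z := Subsingleton.elim _ _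
  rw [map_map]
  have h : (constFiberEquiv X 0).symm.trans (constFiberEquiv X 0) = Equiv.refl _ :=
    Equiv.ext fun q => Subtype.ext rfl
  rw [h, R.map_refl]

lemma genIdeal_isHIdeal (E : Set (R.data.A (Fin 1))) : R.IsHIdeal (genIdeal R E) := by
  intro Y instY B D γ hγ
  have hγ' : ∀ y, ∃ (X : Type) (inst : Finite X), ∃ b d : @GenRingData.A R.data X inst,
      ∃ c : X → R.data.A (Fin 1), (∀ x, c x ∈ E) ∧
        @GenRingData.pair R.data X inst (@GenRingData.ract R.data X inst b c) d = γ y := hγ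
  choose XX instX bb dd cc hcc hrep using hγ'
  haveI : ∀ y, Finite (XX y) := instX
  -- Step A family computation
  have hAfam : R.data.econtr (fun y : Y => some y)
      (fun p : (y' : Y) × XX y' => some p.1)
      (fun y => R.data.map (sigmaFibEquiv XX y) (R.data.ract (bb y) (cc y)))
      (fun y => R.data.map (sigmaFibEquiv XX y) (dd y))
      = fun y => R.data.map (idFiberEquiv y) (γ y) := by
    funext y
    haveI : Subsingleton (pfib (fun y : Y => some y) y) :=
      ⟨fun a b => Subtype.ext ((Option.some.inj a.2).trans (Option.some.inj b.2).symm)⟩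
    have hF : resMap (fun y : Y => some y) (fun p : (y' : Y) × XX y' => some p.1) y
        = fun _ => some (⟨y, rfl⟩ : pfib (fun y : Y => some y) y) := by
      funext q
      simp only [resMap, Option.bind_some]
      have hcond : some q.1.1 = some y := q.2
      rw [dif_pos hcond]
      exact congrArg some (Subtype.ext (Option.some.inj hcond))
    rw [← hrep y]
    refine contr_point R (sigmaFibEquiv XX y)
      (⟨y, rfl⟩ : pfib (fun y : Y => some y) y) _ hF
      (R.data.ract (bb y) (cc y)) (dd y) (idFiberEquiv y) _ ?_
    rintro ⟨y', ht⟩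
    obtain rfl : y = y' := (Option.some.inj ht).symm
    refine ⟨(sigmaFibEquiv XX y).trans
      (resFiberEquiv (fun y : Y => some y) (fun p : (y' : Y) × XX y' => some p.1) y
        ⟨y, ht⟩), ?_, ?_⟩
    · show R.data.map _ (R.data.map (sigmaFibEquiv XX y) (dd y)) = _
      exact map_map R _ _ _
    · intro x
      exact Subtype.ext rfl
  -- Step A
  have hA : R.data.ract B γ
      = R.data.contr (fun p : (y' : Y) × XX y' => some p.1)
          (R.data.mul (fun p : (y' : Y) × XX y' => some p.1) B
            (fun y => R.data.map (sigmaFibEquiv XX y) (R.data.ract (bb y) (cc y))))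
          (fun y => R.data.map (sigmaFibEquiv XX y) (dd y)) := by
    have h := R.left_lin (fun y : Y => some y)
      (fun p : (y' : Y) × XX y' => some p.1) B
      (fun y => R.data.map (sigmaFibEquiv XX y) (R.data.ract (bb y) (cc y)))
      (fun y => R.data.map (sigmaFibEquiv XX y) (dd y))
    rw [hAfam] at h
    exact h.symm
  -- Step B
  have hB : R.data.pair (R.data.ract B γ) D
      = R.data.contr (pcomp (fun _ : Y => some (0 : Fin 1))
          (fun p : (y' : Y) × XX y' => some p.1))
          (R.data.mul (fun p : (y' : Y) × XX y' => some p.1) B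
            (fun y => R.data.map (sigmaFibEquiv XX y) (R.data.ract (bb y) (cc y))))
          (R.data.emul (fun _ : Y => some (0 : Fin 1))
            (fun p : (y' : Y) × XX y' => some p.1)
            (fun z => R.data.map (constFiberEquiv Y z) D)
            (fun y => R.data.map (sigmaFibEquiv XX y) (dd y))) := by
    rw [hA]
    exact (R.left_adj (fun _ : Y => some (0 : Fin 1))
      (fun p : (y' : Y) × XX y' => some p.1)
      (R.data.mul (fun p : (y' : Y) × XX y' => some p.1) B
        (fun y => R.data.map (sigmaFibEquiv XX y) (R.data.ract (bb y) (cc y))))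
      (fun z => R.data.map (constFiberEquiv Y z) D)
      (fun y => R.data.map (sigmaFibEquiv XX y) (dd y))).symm
  -- Step C family computation
  have hCfam : ∀ y, R.data.emul (fun p : (y' : Y) × XX y' => some p.1)
      (fun p : (y' : Y) × XX y' => some p)
      (fun y => R.data.map (sigmaFibEquiv XX y) (bb y))
      (fun p => R.data.map (idFiberEquiv p) (cc p.1 p.2)) y
      = R.data.map (sigmaFibEquiv XX y) (R.data.ract (bb y) (cc y)) := by
    intro y
    have hF : resMap (fun p : (y' : Y) × XX y' => some p.1)
        (fun p : (y' : Y) × XX y' => some p) y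
        = fun q => some ((sigmaFibEquiv XX y) ((sigmaFibEquiv XX y).symm q)) := by
      funext q
      simp only [resMap, Option.bind_some]
      have hcond : some q.1.1 = some y := q.2
      rw [dif_pos hcond]
      refine congrArg some ?_
      refine Eq.trans ?_ (Equiv.apply_symm_apply (sigmaFibEquiv XX y) q).symm
      exact Subtype.ext rfl
    refine ract_master R (sigmaFibEquiv XX y) (sigmaFibEquiv XX y) _ hF (bb y) (cc y) _ ?_
    rintro ⟨⟨y', t⟩, hq⟩
    obtain rfl : y = y' := (Option.some.inj hq).symm
    refine ⟨(idFiberEquiv (⟨y, t⟩ : (y' : Y) × XX y')).trans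
      (resFiberEquiv (fun p : (y' : Y) × XX y' => some p.1)
        (fun p : (y' : Y) × XX y' => some p) y ⟨⟨y, t⟩, hq⟩), ?_⟩
    show R.data.map _ (R.data.map (idFiberEquiv (⟨y, t⟩ : (y' : Y) × XX y'))
      (cc y t)) = _
    rw [map_map]
    rfl
  -- Step C
  have hC : R.data.ract
      (R.data.mul (fun p : (y' : Y) × XX y' => some p.1) B
        (fun y => R.data.map (sigmaFibEquiv XX y) (bb y)))
      (fun p => cc p.1 p.2)
      = R.data.mul (fun p : (y' : Y) × XX y' => some p.1) B
          (fun y => R.data.map (sigmaFibEquiv XX y) (R.data.ract (bb y) (cc y))) := by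
    have h := R.assoc (fun p : (y' : Y) × XX y' => some p.1)
      (fun p : (y' : Y) × XX y' => some p) B
      (fun y => R.data.map (sigmaFibEquiv XX y) (bb y))
      (fun p => R.data.map (idFiberEquiv p) (cc p.1 p.2))
    have h2 : R.data.mul (fun p : (y' : Y) × XX y' => some p.1) B
        (R.data.emul (fun p : (y' : Y) × XX y' => some p.1)
          (fun p : (y' : Y) × XX y' => some p)
          (fun y => R.data.map (sigmaFibEquiv XX y) (bb y))
          (fun p => R.data.map (idFiberEquiv p) (cc p.1 p.2)))
        = R.data.mul (fun p : (y' : Y) × XX y' => some p.1) B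
            (fun y => R.data.map (sigmaFibEquiv XX y) (R.data.ract (bb y) (cc y))) :=
      congrArg _ (funext hCfam)
    exact h.symm.trans h2
  -- assemble
  refine ⟨(y' : Y) × XX y', inferInstance,
    R.data.mul (fun p : (y' : Y) × XX y' => some p.1) B
      (fun y => R.data.map (sigmaFibEquiv XX y) (bb y)),
    R.data.map (constFiberEquiv ((y' : Y) × XX y') 0).symm
      (R.data.emul (fun _ : Y => some (0 : Fin 1))
        (fun p : (y' : Y) × XX y' => some p.1)
        (fun z => R.data.map (constFiberEquiv Y z) D)
        (fun y => R.data.map (sigmaFibEquiv XX y) (dd y)) 0),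
    fun p => cc p.1 p.2, fun p => hcc p.1 p.2, ?_⟩
  rw [hC]
  have hB2 := contr_to_pair R
    (R.data.mul (fun p : (y' : Y) × XX y' => some p.1) B
      (fun y => R.data.map (sigmaFibEquiv XX y) (R.data.ract (bb y) (cc y))))
    (R.data.emul (fun _ : Y => some (0 : Fin 1))
      (fun p : (y' : Y) × XX y' => some p.1)
      (fun z => R.data.map (constFiberEquiv Y z) D)
      (fun y => R.data.map (sigmaFibEquiv XX y) (dd y)))
  exact hB2.symm.trans hB.symm
end Radical8
section Radical9

variable (R : GenRing)

lemma prime_avoiding (a : Set (R.data.A (Fin 1))) (ha : R.IsHIdeal a)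
    (x : R.data.A (Fin 1)) (hx : ∀ n, 0 < n → R.data.opPow x n ∉ a) :
    ∃ P : Set (R.data.A (Fin 1)), R.IsPrimeH P ∧ a ⊆ P ∧ x ∉ P := by
  set S : Set (Set (R.data.A (Fin 1))) :=
    {I | R.IsHIdeal I ∧ a ⊆ I ∧ ∀ n, 0 < n → R.data.opPow x n ∉ I} with hS
  have hchain : ∀ c ⊆ S, IsChain (· ⊆ ·) c → c.Nonempty →
      ∃ ub ∈ S, ∀ s ∈ c, s ⊆ ub := by
    intro c hcS hch ⟨J0, hJ0⟩
    refine ⟨⋃₀ c, ⟨?_, ?_, ?_⟩, fun s hs => Set.subset_sUnion_of_mem hs⟩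
    · intro X instX b d cfam hcfam
      by_cases hX : Nonempty X
      · have hch' : ∀ x : X, ∃ J ∈ c, cfam x ∈ J := fun x =>
          Set.mem_sUnion.mp (hcfam x)
        choose J hJc hJm using hch'
        have hfin : (Set.range J).Finite := Set.finite_range J
        have hne : (Set.range J).Nonempty := Set.range_nonempty J
        obtain ⟨Jm, hJmr, hmax⟩ : ∃ a ∈ Set.range J, ∀ a' ∈ Set.range J, id a ≤ id a' → id a = id a' := by
          obtain ⟨a, ha, hm⟩ := Set.Finite.exists_maximalFor id _ hfin hne
          exact ⟨a, ha, fun a' ha' h => le_antisymm h (hm ha' h)⟩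
        have hJmc : Jm ∈ c := by
          obtain ⟨x0, hx0⟩ := hJmr
          exact hx0 ▸ hJc x0
        have hsub : ∀ x, cfam x ∈ Jm := by
          intro x
          rcases hch.total (hJc x) hJmc with h | h
          · exact h (hJm x)
          · have heq : Jm = J x := hmax (J x) ⟨x, rfl⟩ h
            rw [heq]
            exact hJm x
        exact Set.mem_sUnion.mpr ⟨Jm, hJmc, (hcS hJmc).1 X b d cfam hsub⟩
      · haveI : IsEmpty X := not_nonempty_iff.mp hX
        have hb : b = R.data.zero X := R.isEmpty_eq_zero X b
        have e1 : R.data.ract (R.data.zero X) cfam = R.data.zero X :=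
          R.mul_zero_left _ _
        have e2 : R.data.pair (R.data.zero X) d = R.data.zero (Fin 1) :=
          R.contr_zero_left _ _
        rw [hb, e1, e2]
        exact Set.mem_sUnion.mpr ⟨J0, hJ0, zero_mem_hIdeal R (hcS hJ0).1⟩
    · exact (hcS hJ0).2.1.trans (Set.subset_sUnion_of_mem hJ0)
    · rintro n hn hmem
      obtain ⟨J, hJ, hmemJ⟩ := Set.mem_sUnion.mp hmem
      exact (hcS hJ).2.2 n hn hmemJ
  obtain ⟨M, haM, hMmax⟩ := zorn_subset_nonempty S hchain a ⟨ha, subset_rfl, hx⟩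
  obtain ⟨hMid, hMa, hMpow⟩ := hMmax.1
  have hone : R.data.one ∉ M := by
    intro h
    exact hMpow 1 one_pos (univ_of_one_mem R hMid h _)
  have hxM : x ∉ M := by
    intro h
    refine hMpow 1 one_pos ?_
    rwa [opPow_one']
  refine ⟨M, ⟨hMid, hone, ?_⟩, hMa, hxM⟩
  intro u v huv
  by_contra hc
  push_neg at hc
  obtain ⟨hu, hv⟩ := hc
  -- powers land in the enlarged ideals
  have hgen : ∀ w, w ∉ M → ∃ n, 0 < n ∧ R.data.opPow x n ∈ genIdeal R (M ∪ {w}) := by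
    intro w hw
    by_contra hno
    push_neg at hno
    have hmem : genIdeal R (M ∪ {w}) ∈ S := by
      refine ⟨genIdeal_isHIdeal R _, ?_, ?_⟩
      · exact (hMa.trans Set.subset_union_left).trans (subset_genIdeal R _)
      · intro n hn hmem
        exact (hno n hn) hmem
    have hsub := hMmax.2 hmem
      ((Set.subset_union_left).trans (subset_genIdeal R _))
    exact hw (hsub (subset_genIdeal R _ (Set.mem_union_right M rfl)))
  obtain ⟨n, hn, hxn⟩ := hgen u hu
  obtain ⟨m, hm, hxm⟩ := hgen v hv
  obtain ⟨Xu, instu, bu, du, cu, hcu, hru⟩ := hxn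
  obtain ⟨Xv, instv, bv, dv, cv, hcv, hrv⟩ := hxm
  haveI := instu
  haveI := instv
  have h1 : R.data.op (R.data.opPow x n) (R.data.opPow x m)
      = R.data.pair (R.data.ract bu (fun i => R.data.op (cu i) (R.data.opPow x m))) du := by
    rw [← hru, op_pair, double_ract]
  have h2 : R.data.op u (R.data.opPow x m)
      = R.data.pair (R.data.ract bv (fun j => R.data.op (cv j) u)) dv := by
    rw [← hrv, op_comm, op_pair, double_ract]
  have hcomp : ∀ i, R.data.op (cu i) (R.data.opPow x m) ∈ M := by
    intro i
    rcases hcu i with hM' | hu'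
    · rw [op_comm]
      exact op_mem_hIdeal_right R hMid hM' _
    · rw [show cu i = u from hu', h2]
      refine hMid Xv bv dv _ ?_
      intro j
      rcases hcv j with hM'' | hv''
      · exact op_mem_hIdeal_left R hMid hM'' u
      · rw [show cv j = v from hv'', op_comm]
        exact huv
  have hfin : R.data.opPow x (n + m) ∈ M := by
    rw [opPow_add, h1]
    exact hMid Xu bu du _ hcomp
  exact hMpow (n + m) (by omega) hfin

end Radical9

/-- **`I(V(𝔞)) = √𝔞`.**  For any generalized ring `R` and any `h`-ideal `𝔞`, the
intersection of all prime `h`-ideals containing `𝔞` equals the radical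
`√𝔞 = {a : aⁿ ∈ 𝔞 for some n > 0}`. -/
theorem iInter_zeroLocus_eq_radical (R : GenRing) (a : Set (R.data.A (Fin 1)))
    (ha : R.IsHIdeal a) :
    (⋂ p ∈ R.zeroLocus a, SpecG.I p) = {x | ∃ n, 0 < n ∧ R.data.opPow x n ∈ a} := by
  ext w
  simp only [Set.mem_iInter, Set.mem_setOf_eq]
  constructor
  · intro hw
    by_contra hno
    push_neg at hno
    obtain ⟨P, hP, haP, hwP⟩ := prime_avoiding R a ha w (fun n hn => hno n hn)
    exact hwP (hw ⟨P, hP⟩ haP)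
  · rintro ⟨n, hn, hna⟩ p hp
    have desc : ∀ k, 0 < k → R.data.opPow w k ∈ p.I → w ∈ p.I := by
      intro k
      induction k with
      | zero => exact fun h => absurd h (lt_irrefl 0)
      | succ k ih =>
          intro _ hmem
          rcases p.prime.2.2 w (R.data.opPow w k) hmem with h | h
          · exact h
          · rcases Nat.eq_zero_or_pos k with h0 | hk
            · subst h0
              exact (p.prime.2.1 h).elim
            · exact ih hk h
    exact desc n hn (hp hna)

end
end

section
/- For any generalized ring A, the topological space spec(A) is sober: the map 𝔭 ↦ V(𝔭) = closure of {𝔭} is a bijection from spec(A) onto the set of irreducible closed subsets of spec(A); equivalently, every irreducible closed subset of spec(A) has a unique generic point. -/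
open scoped Classical

noncomputable section

namespace GenRing

variable {R : GenRing}

theorem specG_ext {p q : SpecG R} (h : p.I = q.I) : p = q := by
  cases p; cases q; simp_all

theorem isOpen_basicOpen (a : R.data.A (Fin 1)) : IsOpen (R.basicOpen a) :=
  TopologicalSpace.GenerateOpen.basic _ ⟨a, rfl⟩

theorem isClosed_zeroLocus (s : Set (R.data.A (Fin 1))) : IsClosed (R.zeroLocus s) := by
  rw [← isOpen_compl_iff]
  have : (R.zeroLocus s)ᶜ = ⋃ a ∈ s, R.basicOpen a := by
    ext p
    simp only [Set.mem_compl_iff, zeroLocus, Set.mem_setOf_eq, Set.mem_iUnion, basicOpen,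
      Set.subset_def]
    push_neg
    exact exists_congr fun a => exists_prop.symm
  rw [this]
  exact isOpen_biUnion fun a _ => isOpen_basicOpen a

theorem mem_open_of_subset {p q : SpecG R} (hpq : p.I ⊆ q.I) {U : Set (SpecG R)}
    (hU : IsOpen U) (hq : q ∈ U) : p ∈ U := by
  induction hU with
  | basic V hV => obtain ⟨a, rfl⟩ := hV; exact fun ha => hq (hpq ha)
  | univ => trivial
  | inter U V _ _ ihU ihV => exact ⟨ihU hq.1, ihV hq.2⟩
  | sUnion S _ ih =>
    obtain ⟨t, ht, hqt⟩ := hq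
    exact ⟨t, ht, ih t ht hqt⟩

theorem closure_singleton_eq (p : SpecG R) : closure {p} = R.zeroLocus p.I := by
  apply Set.Subset.antisymm
  · exact closure_minimal (Set.singleton_subset_iff.2 (fun _ h => h))
      (isClosed_zeroLocus p.I)
  · intro q hq
    rw [mem_closure_iff]
    intro U hU hqU
    exact ⟨p, mem_open_of_subset hq hU hqU, rfl⟩

end GenRing

/-- **`spec` of a generalized ring is sober.**  Every irreducible closed subset of the
spectrum of a generalized ring has a unique generic point; equivalently,
`𝔭 ↦ closure {𝔭} = V(𝔭)` is a bijection onto the irreducible closed subsets. -/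
theorem specG_sober (R : GenRing) (C : Set (SpecG R))
    (hirr : IsIrreducible C) (hcl : IsClosed C) :
    ∃! p : SpecG R, closure {p} = C := by
  classical
  obtain ⟨⟨q0, hq0⟩, hpre⟩ := hirr
  set J : Set (R.data.A (Fin 1)) := ⋂ q ∈ C, q.I with hJ
  have hJsub : ∀ q ∈ C, J ⊆ q.I := fun q hq => Set.biInter_subset_of_mem hq
  have hJmem : ∀ a, a ∈ J ↔ ∀ q ∈ C, a ∈ q.I := by
    intro a; simp [hJ, Set.mem_iInter]
  have hprime : R.IsPrimeH J := by
    refine ⟨?_, ?_, ?_⟩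
    · intro X _ b d c hc
      rw [hJmem]
      intro q hq
      exact q.prime.1 X b d c fun x => hJsub q hq (hc x)
    · intro h
      exact q0.prime.2.1 (hJsub q0 hq0 h)
    · intro a b hab
      by_contra hcon
      push_neg at hcon
      obtain ⟨ha, hb⟩ := hcon
      rw [hJmem] at ha hb
      push_neg at ha hb
      obtain ⟨q1, hq1, hq1a⟩ := ha
      obtain ⟨q2, hq2, hq2b⟩ := hb
      obtain ⟨q, hqC, hqa, hqb⟩ := hpre (R.basicOpen a) (R.basicOpen b)
        (GenRing.isOpen_basicOpen a) (GenRing.isOpen_basicOpen b)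
        ⟨q1, hq1, hq1a⟩ ⟨q2, hq2, hq2b⟩
      rcases q.prime.2.2 a b (hJsub q hqC hab) with h | h
      · exact hqa h
      · exact hqb h
  refine ⟨⟨J, hprime⟩, ?_, ?_⟩
  · show closure {(⟨J, hprime⟩ : SpecG R)} = C
    rw [GenRing.closure_singleton_eq]
    apply Set.Subset.antisymm
    · intro q hq
      by_contra hqC
      -- q ∉ C, so q lies in the open complement; use the subbasis
      have hbasis := TopologicalSpace.isTopologicalBasis_of_subbasis
        (rfl : (inferInstance : TopologicalSpace (SpecG R)) =
          TopologicalSpace.generateFrom {U | ∃ a : R.data.A (Fin 1), U = R.basicOpen a})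
      obtain ⟨V, hV, hqV, hVsub⟩ := hbasis.exists_subset_of_mem_open
        (show q ∈ Cᶜ from hqC) hcl.isOpen_compl
      obtain ⟨f, ⟨hffin, hfsub⟩, rfl⟩ := hV
      -- C ⊆ ⋃ of complements of elements of f, each closed
      have hcover : C ⊆ ⋃₀ ↑(hffin.toFinset.image compl) := by
        intro r hr
        by_contra hcon
        have : r ∈ ⋂₀ f := by
          intro t ht
          by_contra hrt
          have hmem : tᶜ ∈ ((hffin.toFinset.image compl : Finset (Set (SpecG R))) :
              Set (Set (SpecG R))) := by
            simp only [Finset.coe_image, Set.Finite.coe_toFinset]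
            exact ⟨t, ht, rfl⟩
          exact hcon ⟨tᶜ, hmem, hrt⟩
        exact hVsub this hr
      have hclosed : ∀ z ∈ hffin.toFinset.image compl, IsClosed z := by
        intro z hz
        simp only [Finset.mem_image, Set.Finite.mem_toFinset] at hz
        obtain ⟨t, htf, rfl⟩ := hz
        obtain ⟨a, rfl⟩ := hfsub htf
        exact (GenRing.isOpen_basicOpen a).isClosed_compl
      obtain ⟨z, hzmem, hCz⟩ := (isIrreducible_iff_sUnion_isClosed.mp ⟨⟨q0, hq0⟩, hpre⟩)
        (hffin.toFinset.image compl) hclosed hcover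
      simp only [Finset.mem_image, Set.Finite.mem_toFinset] at hzmem
      obtain ⟨t, htf, rfl⟩ := hzmem
      obtain ⟨a, rfl⟩ := hfsub htf
      -- a ∈ r.I for all r ∈ C, so a ∈ J ⊆ q.I; but q ∈ basicOpen a
      have haJ : a ∈ J := by
        rw [hJmem]
        intro r hr
        have := hCz hr
        simpa [GenRing.basicOpen] using this
      have : q ∈ R.basicOpen a := hqV (R.basicOpen a) htf
      exact this (hq haJ)
    · intro q hq
      exact hJsub q hq
  · intro p hp
    apply GenRing.specG_ext
    rw [GenRing.closure_singleton_eq] at hp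
    have hpC : p ∈ C := by rw [← hp]; exact fun _ h => h
    have h1 : J ⊆ p.I := hJsub p hpC
    have h2 : p.I ⊆ J := by
      rw [hJ]
      intro a ha
      rw [Set.mem_iInter₂]
      intro q hq
      rw [← hp] at hq
      exact hq ha
    exact Set.Subset.antisymm h2 h1

end
end

section
/- For any generalized ring A and any a ∈ A_{[1]}, the basic open set D_a ⊆ spec(A) is quasi-compact: every cover of D_a by basic open sets D_{g_i} admits a finite subcover. In particular spec(A) = D_1 is quasi-compact. -/
open scoped Classical

noncomputable section

/-! ### Auxiliary results for quasi-compactness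

The set of primes of `R` avoiding a given element `a` can be encoded as a closed
subset of the Boolean cube `A_{[1]} → Bool` (with the product topology), because all
conditions defining a prime `h`-ideal only involve finitely many "coordinates" at a
time.  Since the cube is compact (Tychonoff), this yields the finite-subcover
property for basic open sets; quasi-compactness of the whole spectrum then follows
from an ultrafilter argument. -/

section CompactnessAux

variable (R : GenRing)

/-- The subset of the Boolean cube encoding the primes of `R` that avoid `a`. -/
def primeCube (a : R.data.A (Fin 1)) : Set (R.data.A (Fin 1) → Bool) :=
  {P | R.IsPrimeH {t | P t = true} ∧ P a = false}

lemma isClopen_coord (t : R.data.A (Fin 1)) :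
    IsClopen {P : R.data.A (Fin 1) → Bool | P t = true} := by
  have h : {P : R.data.A (Fin 1) → Bool | P t = true}
      = (fun P : R.data.A (Fin 1) → Bool => P t) ⁻¹' {true} := by
    ext P; simp
  rw [h]
  exact (isClopen_discrete _).preimage (continuous_apply t)

lemma isClosed_primeCube (a : R.data.A (Fin 1)) : IsClosed (primeCube R a) := by
  have hdec : primeCube R a =
      (⋂ j : (X : Type) ×' (inst : Finite X) ×'
          (@GenRingData.A R.data X inst) ×' (@GenRingData.A R.data X inst) ×'
          (X → R.data.A (Fin 1)),
        {P : R.data.A (Fin 1) → Bool |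
          (∀ x, P (j.2.2.2.2 x) = true) →
            P (@GenRingData.pair R.data j.1 j.2.1
                (@GenRingData.ract R.data j.1 j.2.1 j.2.2.1 j.2.2.2.2) j.2.2.2.1) = true})
      ∩ ({P : R.data.A (Fin 1) → Bool | P R.data.one = true}ᶜ
      ∩ ((⋂ u : R.data.A (Fin 1), ⋂ v : R.data.A (Fin 1),
          {P : R.data.A (Fin 1) → Bool |
            P (R.data.op u v) = true → (P u = true ∨ P v = true)})
      ∩ {P : R.data.A (Fin 1) → Bool | P a = true}ᶜ)) := by
    ext P
    constructor
    · rintro ⟨⟨hId, hone, hpr⟩, ha⟩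
      refine ⟨Set.mem_iInter.2 ?_, ?_, ?_, ?_⟩
      · rintro ⟨X, inst, b, d, c⟩
        intro hc
        exact hId X b d c hc
      · exact hone
      · refine Set.mem_iInter.2 fun u => Set.mem_iInter.2 fun v => ?_
        exact fun h => hpr u v h
      · simp only [Set.mem_compl_iff, Set.mem_setOf_eq, ha]
        simp
    · rintro ⟨h1, h2, h3, h4⟩
      refine ⟨⟨?_, ?_, ?_⟩, ?_⟩
      · intro X instX b d c hc
        exact Set.mem_iInter.1 h1 ⟨X, instX, b, d, c⟩ hc
      · exact h2
      · intro u v huv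
        exact Set.mem_iInter.1 (Set.mem_iInter.1 h3 u) v huv
      · simp only [Set.mem_compl_iff, Set.mem_setOf_eq] at h4
        simpa using h4
  rw [hdec]
  refine IsClosed.inter (isClosed_iInter ?_)
    (IsClosed.inter ((isClopen_coord R _).isOpen.isClosed_compl)
      (IsClosed.inter ?_ ((isClopen_coord R _).isOpen.isClosed_compl)))
  · rintro ⟨X, inst, b, d, c⟩
    have h : {P : R.data.A (Fin 1) → Bool |
        (∀ x, P (c x) = true) →
          P (@GenRingData.pair R.data X inst
              (@GenRingData.ract R.data X inst b c) d) = true}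
        = (⋂ x : X, {P : R.data.A (Fin 1) → Bool | P (c x) = true})ᶜ
          ∪ {P : R.data.A (Fin 1) → Bool |
              P (@GenRingData.pair R.data X inst
                  (@GenRingData.ract R.data X inst b c) d) = true} := by
      ext P
      simp only [Set.mem_setOf_eq, Set.mem_union, Set.mem_compl_iff, Set.mem_iInter]
      tauto
    rw [h]
    exact ((isOpen_iInter_of_finite fun x =>
      (isClopen_coord R (c x)).isOpen).isClosed_compl).union (isClopen_coord R _).isClosed
  · refine isClosed_iInter fun u => isClosed_iInter fun v => ?_
    have h : {P : R.data.A (Fin 1) → Bool |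
        P (R.data.op u v) = true → (P u = true ∨ P v = true)}
        = {P : R.data.A (Fin 1) → Bool | P (R.data.op u v) = true}ᶜ
          ∪ ({P : R.data.A (Fin 1) → Bool | P u = true}
            ∪ {P : R.data.A (Fin 1) → Bool | P v = true}) := by
      ext P
      simp only [Set.mem_setOf_eq, Set.mem_union, Set.mem_compl_iff]
      tauto
    rw [h]
    exact ((isClopen_coord R _).isOpen.isClosed_compl).union
      ((isClopen_coord R _).isClosed.union (isClopen_coord R _).isClosed)

end CompactnessAux

/-- **Quasi-compactness of the basic open sets.**  For any generalized ring `R` and any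
`a ∈ A_{[1]}`, every cover of the basic open set `D_a` by basic open sets `D_{g i}`
admits a finite subcover; in particular `spec(R) = D_1` is quasi-compact. -/
theorem basicOpen_compact (R : GenRing) (a : R.data.A (Fin 1)) :
    (∀ (ι : Type) (g : ι → R.data.A (Fin 1)),
        R.basicOpen a ⊆ ⋃ i, R.basicOpen (g i) →
        ∃ s : Finset ι, R.basicOpen a ⊆ ⋃ i ∈ s, R.basicOpen (g i)) ∧
      IsCompact (Set.univ : Set (SpecG R)) := by
  constructor
  · -- finite subcover for covers of `D_a` by basic opens, via compactness of the cube
    intro ι g hcov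
    have hK : IsCompact (primeCube R a) := (isClosed_primeCube R a).isCompact
    have hZ : ∀ i : ι, IsClosed {P : R.data.A (Fin 1) → Bool | P (g i) = true} :=
      fun i => (isClopen_coord R (g i)).isClosed
    have hempty : primeCube R a ∩
        (⋂ i, {P : R.data.A (Fin 1) → Bool | P (g i) = true}) = ∅ := by
      rw [Set.eq_empty_iff_forall_notMem]
      rintro P ⟨⟨hprime, hfa⟩, hall⟩
      -- decode a prime from the Boolean predicate
      let p : SpecG R := ⟨{t | P t = true}, hprime⟩
      have hpa : p ∈ R.basicOpen a := by
        intro h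
        have h' : P a = true := h
        rw [hfa] at h'
        exact Bool.noConfusion h'
      obtain ⟨i, hgi⟩ := Set.mem_iUnion.1 (hcov hpa)
      exact hgi (Set.mem_iInter.1 hall i)
    obtain ⟨s, hs⟩ := hK.elim_finite_subfamily_closed _ hZ hempty
    refine ⟨s, fun p hpa => ?_⟩
    -- encode the prime `p` as a Boolean predicate
    have hPmem : (fun t => decide (t ∈ p.I)) ∈ primeCube R a := by
      constructor
      · have h : {t | decide (t ∈ p.I) = true} = p.I := by
          ext t; simp
        rw [h]
        exact p.prime
      · exact decide_eq_false hpa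
    have hnot : (fun t => decide (t ∈ p.I)) ∉
        ⋂ i ∈ s, {P : R.data.A (Fin 1) → Bool | P (g i) = true} := by
      intro hmem
      have h0 : (fun t => decide (t ∈ p.I)) ∈
          primeCube R a ∩ ⋂ i ∈ s, {P : R.data.A (Fin 1) → Bool | P (g i) = true} :=
        ⟨hPmem, hmem⟩
      rw [hs] at h0
      exact h0
    simp only [Set.mem_iInter, Set.mem_setOf_eq] at hnot
    push_neg at hnot
    obtain ⟨i, hi, hne⟩ := hnot
    have hgi : g i ∉ p.I := fun h => hne (by simp [h])
    exact Set.mem_biUnion hi hgi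
  · -- quasi-compactness of the whole spectrum, via ultrafilters
    rw [isCompact_iff_ultrafilter_le_nhds]
    intro f _
    -- the limit prime of the ultrafilter
    have hprime : R.IsPrimeH {t | {q : SpecG R | t ∈ q.I} ∈ f} := by
      refine ⟨?_, ?_, ?_⟩
      · intro X _ b d c hc
        have hmem : (⋂ x : X, {q : SpecG R | c x ∈ q.I}) ∈ f :=
          Filter.iInter_mem.2 hc
        refine Filter.mem_of_superset hmem ?_
        intro q hq
        exact q.prime.1 X b d c fun x => Set.mem_iInter.1 hq x
      · intro h
        have hempty : ({q : SpecG R | R.data.one ∈ q.I}) = (∅ : Set (SpecG R)) := by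
          rw [Set.eq_empty_iff_forall_notMem]
          exact fun q hq => q.prime.2.1 hq
        have h' : {q : SpecG R | R.data.one ∈ q.I} ∈ f := h
        rw [hempty] at h'
        exact Filter.empty_notMem (f : Filter (SpecG R)) h'
      · intro u v huv
        have hsub : {q : SpecG R | R.data.op u v ∈ q.I} ⊆
            {q : SpecG R | u ∈ q.I} ∪ {q : SpecG R | v ∈ q.I} :=
          fun q hq => q.prime.2.2 u v hq
        exact Ultrafilter.union_mem_iff.1 (Filter.mem_of_superset huv hsub)
    refine ⟨⟨{t | {q : SpecG R | t ∈ q.I} ∈ f}, hprime⟩, Set.mem_univ _, ?_⟩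
    refine le_trans ?_ (le_of_eq (TopologicalSpace.nhds_generateFrom).symm)
    refine le_iInf fun U => le_iInf fun hU => Filter.le_principal_iff.2 ?_
    obtain ⟨hmemU, t, rfl⟩ := hU
    have ht : {q : SpecG R | t ∈ q.I} ∉ f := hmemU
    have hc : {q : SpecG R | t ∈ q.I}ᶜ ∈ f := Ultrafilter.compl_mem_iff_notMem.2 ht
    have heq : {q : SpecG R | t ∈ q.I}ᶜ = R.basicOpen t := rfl
    rwa [heq] at hc

end
end
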